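/- arXiv:2401.15567 — 5 statements merged into one kernel-verified Lean document; each statement's English description precedes it below -/
import Mathlib

section
/- Let {Fₙ} be a filtration, and for each n ≥ 1 let Eₙ be an Fₙ-measurable random d×d positive semidefinite matrix and Aₙ an F_{n−1}-measurable random d×d positive definite matrix such that E(Eₙ | F_{n−1}) ⪯ Aₙ⁻¹ almost surely. Then the process Yₙ = Pₙ Pₙᵀ, where Pₙ = A₁^{1/2} E₁^{1/2} A₂^{1/2} E₂^{1/2} ⋯ Aₙ^{1/2} Eₙ^{1/2} (and Y₀ = I), is a matrix supermartingale with respect to {Fₙ}. -/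
open MeasureTheory ProbabilityTheory Matrix Filter

noncomputable section

/-- Measurable space structure on matrices (entrywise). -/
instance matMS (d : ℕ) : MeasurableSpace (Matrix (Fin d) (Fin d) ℝ) :=
  inferInstanceAs (MeasurableSpace (Fin d → Fin d → ℝ))

/-- Loewner order: `A ⪯ B` iff `B - A` is positive semidefinite. -/
def LoewnerLE {d : ℕ} (A B : Matrix (Fin d) (Fin d) ℝ) : Prop := (B - A).PosSemidef

/-- Entrywise expectation of a random matrix. -/
def matExpect {Ω : Type*} {_ : MeasurableSpace Ω} {d : ℕ} (μ : Measure Ω)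
    (X : Ω → Matrix (Fin d) (Fin d) ℝ) : Matrix (Fin d) (Fin d) ℝ :=
  Matrix.of fun i j => ∫ ω, X ω i j ∂μ

/-- Entrywise conditional expectation of a random matrix. -/
def matCondExp {Ω : Type*} {m0 : MeasurableSpace Ω} {d : ℕ} (μ : Measure Ω)
    (m : MeasurableSpace Ω) (X : Ω → Matrix (Fin d) (Fin d) ℝ) : Ω → Matrix (Fin d) (Fin d) ℝ :=
  fun ω => Matrix.of fun i j => (μ[fun ω' => X ω' i j | m]) ω

/-- Spectral functional calculus for real symmetric matrices: apply `f` to the eigenvalues. -/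
def matCFC {d : ℕ} (f : ℝ → ℝ) (X : Matrix (Fin d) (Fin d) ℝ) : Matrix (Fin d) (Fin d) ℝ :=
  if hX : X.IsHermitian then
    (hX.eigenvectorUnitary : Matrix (Fin d) (Fin d) ℝ) *
      Matrix.diagonal (fun i => f (hX.eigenvalues i)) *
      star (hX.eigenvectorUnitary : Matrix (Fin d) (Fin d) ℝ)
  else 0

/-- Positive semidefinite square root (via the spectral calculus). -/
def matSqrt {d : ℕ} (X : Matrix (Fin d) (Fin d) ℝ) : Matrix (Fin d) (Fin d) ℝ :=
  matCFC Real.sqrt X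

/-- Matrix absolute value of a symmetric matrix. -/
def matAbs {d : ℕ} (X : Matrix (Fin d) (Fin d) ℝ) : Matrix (Fin d) (Fin d) ℝ :=
  matCFC (fun x => |x|) X

/-- Real power of a symmetric (positive (semi)definite) matrix. -/
def matRPow {d : ℕ} (p : ℝ) (X : Matrix (Fin d) (Fin d) ℝ) : Matrix (Fin d) (Fin d) ℝ :=
  matCFC (fun x => x ^ p) X

/-- Matrix logarithm of a positive definite matrix. -/
def matLog {d : ℕ} (X : Matrix (Fin d) (Fin d) ℝ) : Matrix (Fin d) (Fin d) ℝ :=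
  matCFC Real.log X

/-- Matrix exponential. -/
def matExpMat {d : ℕ} (X : Matrix (Fin d) (Fin d) ℝ) : Matrix (Fin d) (Fin d) ℝ :=
  NormedSpace.exp X

/-- Largest eigenvalue of a symmetric matrix. -/
def lamMax {d : ℕ} (X : Matrix (Fin d) (Fin d) ℝ) : ℝ :=
  if hX : X.IsHermitian then ⨆ i, hX.eigenvalues i else 0

/-- Operator (spectral) norm: the largest absolute value of an eigenvalue. -/
def specNorm {d : ℕ} (X : Matrix (Fin d) (Fin d) ℝ) : ℝ :=
  if hX : X.IsHermitian then ⨆ i, |hX.eigenvalues i| else 0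

/-- A random positive semidefinite matrix `U` is trace super-uniform if
`P(U ⋡ Y) ≤ tr Y` for every positive semidefinite `Y`. -/
def TraceSuperUniform {Ω : Type*} {_ : MeasurableSpace Ω} {d : ℕ} (μ : Measure Ω)
    (U : Ω → Matrix (Fin d) (Fin d) ℝ) : Prop :=
  ∀ Y : Matrix (Fin d) (Fin d) ℝ, Y.PosSemidef →
    μ {ω | ¬ LoewnerLE Y (U ω)} ≤ ENNReal.ofReal Y.trace

/-- Matrix supermartingale: adapted, symmetric, entrywise integrable, and
`E(Y (n+1) | ℱ n) ⪯ Y n` a.s. for every `n`. -/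
def IsMatrixSupermartingale {Ω : Type*} {m0 : MeasurableSpace Ω} {d : ℕ}
    (ℱ : Filtration ℕ m0) (μ : Measure Ω) (Y : ℕ → Ω → Matrix (Fin d) (Fin d) ℝ) : Prop :=
  (∀ n ω, (Y n ω).IsHermitian) ∧
  (∀ n i j, StronglyMeasurable[ℱ n] fun ω => Y n ω i j) ∧
  (∀ n i j, Integrable (fun ω => Y n ω i j) μ) ∧
  (∀ n, ∀ᵐ ω ∂μ, LoewnerLE (matCondExp μ (ℱ n) (Y (n + 1)) ω) (Y n ω))

/-- Matrix submartingale: adapted, symmetric, entrywise integrable, and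
`E(Y (n+1) | ℱ n) ⪰ Y n` a.s. for every `n`. -/
def IsMatrixSubmartingale {Ω : Type*} {m0 : MeasurableSpace Ω} {d : ℕ}
    (ℱ : Filtration ℕ m0) (μ : Measure Ω) (Y : ℕ → Ω → Matrix (Fin d) (Fin d) ℝ) : Prop :=
  (∀ n ω, (Y n ω).IsHermitian) ∧
  (∀ n i j, StronglyMeasurable[ℱ n] fun ω => Y n ω i j) ∧
  (∀ n i j, Integrable (fun ω => Y n ω i j) μ) ∧
  (∀ n, ∀ᵐ ω ∂μ, LoewnerLE (Y n ω) (matCondExp μ (ℱ n) (Y (n + 1)) ω))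

/-- Exchangeability of a sequence of random matrices: any finitely supported permutation
of the indices leaves the joint law invariant. -/
def MatExchangeable {Ω : Type*} {_ : MeasurableSpace Ω} {d : ℕ} (μ : Measure Ω)
    (X : ℕ → Ω → Matrix (Fin d) (Fin d) ℝ) : Prop :=
  ∀ σ : Equiv.Perm ℕ, {n | σ n ≠ n}.Finite →
    Measure.map (fun ω n => X (σ n) ω) μ = Measure.map (fun ω n => X n ω) μ

section Aux

variable {d : ℕ} {X : Matrix (Fin d) (Fin d) ℝ} {f g : ℝ → ℝ}

lemma matCFC_of_isHermitian (hX : X.IsHermitian) (f : ℝ → ℝ) :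
    matCFC f X = (hX.eigenvectorUnitary : Matrix (Fin d) (Fin d) ℝ) *
      Matrix.diagonal (fun i => f (hX.eigenvalues i)) *
      star (hX.eigenvectorUnitary : Matrix (Fin d) (Fin d) ℝ) := dif_pos hX

lemma star_mul_self_eigU (hX : X.IsHermitian) :
    star (hX.eigenvectorUnitary : Matrix (Fin d) (Fin d) ℝ) *
      (hX.eigenvectorUnitary : Matrix (Fin d) (Fin d) ℝ) = 1 :=
  hX.eigenvectorUnitary.2.1

lemma mul_star_self_eigU (hX : X.IsHermitian) :
    (hX.eigenvectorUnitary : Matrix (Fin d) (Fin d) ℝ) *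
      star (hX.eigenvectorUnitary : Matrix (Fin d) (Fin d) ℝ) = 1 :=
  hX.eigenvectorUnitary.2.2

lemma matCFC_isHermitian (f : ℝ → ℝ) (X : Matrix (Fin d) (Fin d) ℝ) :
    (matCFC f X).IsHermitian := by
  unfold matCFC
  split_ifs with hX
  · unfold Matrix.IsHermitian
    simp [conjTranspose_mul, star_eq_conjTranspose, Matrix.mul_assoc, diagonal_conjTranspose]
  · exact isHermitian_zero


/-- matCFC is multiplicative in `f`. -/
lemma matCFC_mul (hX : X.IsHermitian) (f g : ℝ → ℝ) :
    matCFC f X * matCFC g X = matCFC (fun x => f x * g x) X := by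
  simp only [matCFC_of_isHermitian hX, Matrix.mul_assoc]
  rw [show star (hX.eigenvectorUnitary : Matrix (Fin d) (Fin d) ℝ) *
      ((hX.eigenvectorUnitary : Matrix (Fin d) (Fin d) ℝ) *
        (Matrix.diagonal (fun i => g (hX.eigenvalues i)) *
          star (hX.eigenvectorUnitary : Matrix (Fin d) (Fin d) ℝ))) =
      Matrix.diagonal (fun i => g (hX.eigenvalues i)) *
        star (hX.eigenvectorUnitary : Matrix (Fin d) (Fin d) ℝ) from by
    rw [← Matrix.mul_assoc, star_mul_self_eigU hX, Matrix.one_mul]]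
  rw [← Matrix.mul_assoc (Matrix.diagonal _), diagonal_mul_diagonal]

/-- matCFC depends only on values of `f` on the eigenvalues. -/
lemma matCFC_congr (hX : X.IsHermitian) {f g : ℝ → ℝ}
    (h : ∀ i, f (hX.eigenvalues i) = g (hX.eigenvalues i)) : matCFC f X = matCFC g X := by
  rw [matCFC_of_isHermitian hX, matCFC_of_isHermitian hX,
    show (fun i => f (hX.eigenvalues i)) = fun i => g (hX.eigenvalues i) from funext h]

lemma matCFC_id (hX : X.IsHermitian) : matCFC (fun x => x) X = X := by
  rw [matCFC_of_isHermitian hX]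
  have h := hX.spectral_theorem
  convert h.symm using 3
  simp [Unitary.conjStarAlgAut_apply, Function.comp_def]

lemma matCFC_add (hX : X.IsHermitian) (f g : ℝ → ℝ) :
    matCFC (fun x => f x + g x) X = matCFC f X + matCFC g X := by
  simp only [matCFC_of_isHermitian hX]
  rw [show Matrix.diagonal (fun i => f (hX.eigenvalues i) + g (hX.eigenvalues i)) =
    Matrix.diagonal (fun i => f (hX.eigenvalues i)) + Matrix.diagonal (fun i => g (hX.eigenvalues i))
    from (diagonal_add _ _).symm, Matrix.mul_add, Matrix.add_mul]

lemma matCFC_const_mul (hX : X.IsHermitian) (c : ℝ) (f : ℝ → ℝ) :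
    matCFC (fun x => c * f x) X = c • matCFC f X := by
  simp only [matCFC_of_isHermitian hX]
  rw [show (fun i => c * f (hX.eigenvalues i)) = c • fun i => f (hX.eigenvalues i) from rfl,
    diagonal_smul, Matrix.mul_smul, Matrix.smul_mul]

lemma matCFC_one (hX : X.IsHermitian) : matCFC (fun _ => (1:ℝ)) X = 1 := by
  rw [matCFC_of_isHermitian hX]
  simp only [diagonal_one, Matrix.mul_one]
  exact mul_star_self_eigU hX

lemma matCFC_smul (hX : X.IsHermitian) (c : ℝ) (f : ℝ → ℝ) :
    matCFC (fun x => c * f x) X = c • matCFC f X := matCFC_const_mul hX c f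

/-- matCFC of a polynomial is polynomial evaluation. -/
lemma matCFC_polynomial (hX : X.IsHermitian) (p : Polynomial ℝ) :
    matCFC (fun x => p.eval x) X = Polynomial.aeval X p := by
  induction p using Polynomial.induction_on with
  | C a =>
      simp only [Polynomial.eval_C, Polynomial.aeval_C, Algebra.algebraMap_eq_smul_one]
      rw [show (fun _ : ℝ => a) = fun x : ℝ => a * 1 from by funext x; ring,
        matCFC_const_mul hX, matCFC_one hX]
  | add p q hp hq =>
      simp only [Polynomial.eval_add, map_add, ← hp, ← hq]
      exact matCFC_add hX _ _
  | monomial n a ih =>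
      have h1 : (fun x : ℝ => Polynomial.eval x (Polynomial.C a * Polynomial.X ^ (n + 1)))
          = fun x => (Polynomial.eval x (Polynomial.C a * Polynomial.X ^ n)) * x := by
        funext x; simp [pow_succ]; ring
      rw [h1, ← matCFC_mul hX, ih, matCFC_id hX, pow_succ, ← mul_assoc]
      simp only [_root_.map_mul, Polynomial.aeval_X]

lemma matSqrt_isHermitian (X : Matrix (Fin d) (Fin d) ℝ) : (matSqrt X).IsHermitian :=
  matCFC_isHermitian _ X

lemma matSqrt_transpose (X : Matrix (Fin d) (Fin d) ℝ) : (matSqrt X)ᵀ = matSqrt X := by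
  have h := matSqrt_isHermitian X
  rwa [Matrix.IsHermitian, conjTranspose_eq_transpose_of_trivial] at h

lemma matSqrt_mul_self (hX : X.PosSemidef) : matSqrt X * matSqrt X = X := by
  unfold matSqrt
  rw [matCFC_mul hX.1]
  rw [matCFC_congr hX.1 (g := fun x => x) fun i =>
    Real.mul_self_sqrt (hX.eigenvalues_nonneg i)]
  exact matCFC_id hX.1

lemma matCFC_posSemidef (hX : X.IsHermitian) (f : ℝ → ℝ)
    (hf : ∀ i, 0 ≤ f (hX.eigenvalues i)) : (matCFC f X).PosSemidef := by
  rw [matCFC_of_isHermitian hX, star_eq_conjTranspose]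
  exact (posSemidef_diagonal_iff.mpr hf).mul_mul_conjTranspose_same _

lemma matSqrt_posSemidef (hX : X.PosSemidef) : (matSqrt X).PosSemidef :=
  matCFC_posSemidef hX.1 _ fun i => Real.sqrt_nonneg _

lemma matSqrt_mul_inv_mul (hX : X.PosDef) : matSqrt X * X⁻¹ * matSqrt X = 1 := by
  have hS : matSqrt X * matSqrt X = X := matSqrt_mul_self hX.posSemidef
  have hdet : (matSqrt X).det ≠ 0 := by
    intro h0
    have hd := congrArg Matrix.det hS
    rw [Matrix.det_mul, h0, mul_zero] at hd
    exact hX.det_pos.ne' hd.symm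
  have hunit : IsUnit (matSqrt X).det := isUnit_iff_ne_zero.mpr hdet
  have hXinv : X⁻¹ = (matSqrt X)⁻¹ * (matSqrt X)⁻¹ := by
    conv_lhs => rw [← hS]
    rw [Matrix.mul_inv_rev]
  rw [hXinv, ← Matrix.mul_assoc, Matrix.mul_nonsing_inv _ hunit, Matrix.one_mul,
    Matrix.nonsing_inv_mul _ hunit]

/-- trace equals sum of eigenvalues -/
lemma trace_eq_sum_eigenvalues (hX : X.IsHermitian) :
    X.trace = ∑ i, hX.eigenvalues i := by
  conv_lhs => rw [hX.spectral_theorem]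
  rw [Unitary.conjStarAlgAut_apply, Matrix.trace_mul_cycle, star_mul_self_eigU hX, Matrix.one_mul,
    Matrix.trace_diagonal]
  simp

lemma eigenvalue_le_trace (hX : X.PosSemidef) (i : Fin d) :
    hX.1.eigenvalues i ≤ X.trace := by
  rw [trace_eq_sum_eigenvalues hX.1]
  exact Finset.single_le_sum (fun j _ => hX.eigenvalues_nonneg j) (Finset.mem_univ i)

/-- Entry bound for matCFC. -/
lemma matCFC_entry_bound (hX : X.IsHermitian) {f : ℝ → ℝ} {C : ℝ}
    (hf : ∀ k, |f (hX.eigenvalues k)| ≤ C) (i j : Fin d) : |matCFC f X i j| ≤ C := by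
  have hC : 0 ≤ C := le_trans (abs_nonneg _) (hf i)
  set U : Matrix (Fin d) (Fin d) ℝ := (hX.eigenvectorUnitary : Matrix (Fin d) (Fin d) ℝ)
  have hrow : ∀ a : Fin d, ∑ k, U a k ^ 2 = 1 := by
    intro a
    have h1 := mul_star_self_eigU hX
    have h2 : (U * star U) a a = (1 : Matrix (Fin d) (Fin d) ℝ) a a := by rw [h1]
    simpa [Matrix.mul_apply, Matrix.star_apply, Matrix.one_apply, pow_two] using h2
  have hentry : matCFC f X i j = ∑ k, U i k * f (hX.eigenvalues k) * U j k := by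
    rw [matCFC_of_isHermitian hX, Matrix.mul_apply]
    simp only [Matrix.mul_diagonal, Matrix.star_apply, star_trivial]
    rfl
  rw [hentry]
  calc |∑ k, U i k * f (hX.eigenvalues k) * U j k|
      ≤ ∑ k, |U i k * f (hX.eigenvalues k) * U j k| := Finset.abs_sum_le_sum_abs _ _
    _ ≤ ∑ k, |U i k| * |U j k| * C := by
        refine Finset.sum_le_sum fun k _ => ?_
        rw [abs_mul, abs_mul]
        calc |U i k| * |f (hX.eigenvalues k)| * |U j k|
            ≤ |U i k| * C * |U j k| := by
              exact mul_le_mul_of_nonneg_right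
                (mul_le_mul_of_nonneg_left (hf k) (abs_nonneg _)) (abs_nonneg _)
          _ = |U i k| * |U j k| * C := by ring
    _ = (∑ k, |U i k| * |U j k|) * C := by rw [Finset.sum_mul]
    _ ≤ 1 * C := by
        refine mul_le_mul_of_nonneg_right ?_ hC
        have hcs := Finset.sum_mul_sq_le_sq_mul_sq Finset.univ
          (fun k => |U i k|) (fun k => |U j k|)
        have hii : ∑ k, |U i k| ^ 2 = 1 := by simpa [sq_abs] using hrow i
        have hjj : ∑ k, |U j k| ^ 2 = 1 := by simpa [sq_abs] using hrow j
        rw [hii, hjj, mul_one] at hcs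
        have hnn : 0 ≤ ∑ k, |U i k| * |U j k| :=
          Finset.sum_nonneg fun k _ => mul_nonneg (abs_nonneg _) (abs_nonneg _)
        nlinarith
    _ = C := one_mul C

lemma matCFC_sub (hX : X.IsHermitian) (f g : ℝ → ℝ) :
    matCFC f X - matCFC g X = matCFC (fun x => f x - g x) X := by
  have h := matCFC_add hX (fun x => f x - g x) g
  simp only [sub_add_cancel] at h
  rw [h]; ring_nf; abel


section Meas


variable {Ω : Type*} {m : MeasurableSpace Ω}

lemma measurable_pow_entry {X : Ω → Matrix (Fin d) (Fin d) ℝ}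
    (hX : ∀ i j, Measurable fun ω => X ω i j) (k : ℕ) :
    ∀ i j, Measurable fun ω => (X ω ^ k) i j := by
  induction k with
  | zero =>
      intro i j
      simp only [pow_zero]
      exact measurable_const
  | succ k ih =>
      intro i j
      simp only [pow_succ]
      have : (fun ω => (X ω ^ k * X ω) i j) = fun ω => ∑ l, (X ω ^ k) i l * X ω l j := by
        funext ω; rw [Matrix.mul_apply]
      rw [this]
      exact Finset.measurable_sum _ fun l _ => (ih i l).mul (hX l j)

lemma measurable_aeval_entry {X : Ω → Matrix (Fin d) (Fin d) ℝ}
    (hX : ∀ i j, Measurable fun ω => X ω i j) (p : Polynomial ℝ) (i j : Fin d) :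
    Measurable fun ω => (Polynomial.aeval (X ω) p) i j := by
  have h : (fun ω => (Polynomial.aeval (X ω) p) i j)
      = fun ω => ∑ k ∈ Finset.range (p.natDegree + 1), (p.coeff k • (X ω ^ k)) i j := by
    funext ω
    rw [Polynomial.aeval_eq_sum_range, Matrix.sum_apply]
  rw [h]
  refine Finset.measurable_sum _ fun k _ => ?_
  simp only [Matrix.smul_apply, smul_eq_mul]
  exact (measurable_pow_entry hX k i j).const_mul _

lemma measurable_matSqrt_entry {X : Ω → Matrix (Fin d) (Fin d) ℝ}
    (hX : ∀ i j, Measurable fun ω => X ω i j) (hpsd : ∀ ω, (X ω).PosSemidef) (i j : Fin d) :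
    Measurable fun ω => matSqrt (X ω) i j := by
  have hex : ∀ k : ℕ, ∃ p : Polynomial ℝ,
      ∀ x ∈ Set.Icc (0:ℝ) (k:ℝ), |p.eval x - Real.sqrt x| < 1 / ((k:ℝ)+1) :=
    fun k => exists_polynomial_near_of_continuousOn 0 k Real.sqrt
      Real.continuous_sqrt.continuousOn _ (by positivity)
  choose ps hps using hex
  have hmeas : ∀ k, Measurable fun ω => (Polynomial.aeval (X ω) (ps k)) i j :=
    fun k => measurable_aeval_entry hX (ps k) i j
  refine measurable_of_tendsto_metrizable hmeas ?_
  rw [tendsto_pi_nhds]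
  intro ω
  have hH : (X ω).IsHermitian := (hpsd ω).1
  rw [tendsto_iff_dist_tendsto_zero]
  refine squeeze_zero' (Eventually.of_forall fun k => dist_nonneg) ?_
    tendsto_one_div_add_atTop_nhds_zero_nat
  filter_upwards [eventually_ge_atTop ⌈(X ω).trace⌉₊] with k hk
  have heig : ∀ l, hH.eigenvalues l ∈ Set.Icc (0:ℝ) (k:ℝ) := by
    intro l
    constructor
    · exact (hpsd ω).eigenvalues_nonneg l
    · calc hH.eigenvalues l ≤ (X ω).trace := eigenvalue_le_trace (hpsd ω) l
        _ ≤ (⌈(X ω).trace⌉₊ : ℝ) := Nat.le_ceil _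
        _ ≤ (k : ℝ) := Nat.cast_le.mpr hk
  have hsub : (Polynomial.aeval (X ω) (ps k)) i j - matSqrt (X ω) i j
      = matCFC (fun x => (ps k).eval x - Real.sqrt x) (X ω) i j := by
    rw [← matCFC_polynomial hH, matSqrt, ← matCFC_sub hH]
    rfl
  rw [Real.dist_eq, hsub]
  exact matCFC_entry_bound hH (fun l => le_of_lt (hps k _ (heig l))) i j

end Meas


section Quad

variable {M : Matrix (Fin d) (Fin d) ℝ}

lemma psd_quad (hM : M.PosSemidef) (x : Fin d → ℝ) : 0 ≤ x ⬝ᵥ M *ᵥ x := by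
  simpa using hM.dotProduct_mulVec_nonneg x

lemma posSemidef_of_quad (h1 : M.IsHermitian) (h2 : ∀ x : Fin d → ℝ, 0 ≤ x ⬝ᵥ M *ᵥ x) :
    M.PosSemidef :=
  .of_dotProduct_mulVec_nonneg h1 fun x => by simpa using h2 x

lemma quad_sum (M : Matrix (Fin d) (Fin d) ℝ) (x : Fin d → ℝ) :
    x ⬝ᵥ M *ᵥ x = ∑ k, ∑ l, x k * x l * M k l := by
  simp only [dotProduct, Matrix.mulVec, Finset.mul_sum]
  refine Finset.sum_congr rfl fun k _ => Finset.sum_congr rfl fun l _ => by ring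

lemma quad_transform (B C : Matrix (Fin d) (Fin d) ℝ) (v : Fin d → ℝ) :
    v ⬝ᵥ (B * C * Bᵀ) *ᵥ v = (Bᵀ *ᵥ v) ⬝ᵥ C *ᵥ (Bᵀ *ᵥ v) := by
  rw [← Matrix.mulVec_mulVec, ← Matrix.mulVec_mulVec, Matrix.dotProduct_mulVec,
    ← Matrix.mulVec_transpose]

lemma quad_single (M : Matrix (Fin d) (Fin d) ℝ) (k l : Fin d) :
    Pi.single k (1:ℝ) ⬝ᵥ M *ᵥ Pi.single l (1:ℝ) = M k l := by
  rw [Matrix.mulVec_single, single_dotProduct]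
  simp

lemma entry_eq_quads (hM : M.IsHermitian) (i j : Fin d) :
    M i j = ((Pi.single i (1:ℝ) + Pi.single j 1) ⬝ᵥ M *ᵥ (Pi.single i (1:ℝ) + Pi.single j 1)
      - Pi.single i (1:ℝ) ⬝ᵥ M *ᵥ Pi.single i (1:ℝ)
      - Pi.single j (1:ℝ) ⬝ᵥ M *ᵥ Pi.single j (1:ℝ)) / 2 := by
  have hji : M j i = M i j := by
    have h := congrFun (congrFun hM i) j
    simpa [Matrix.conjTranspose_apply] using h
  rw [Matrix.mulVec_add, dotProduct_add, add_dotProduct, add_dotProduct,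
    quad_single, quad_single, quad_single, quad_single, hji]
  ring

end Quad




section Key

variable {Ω : Type*} {m0 : MeasurableSpace Ω} {μ : Measure Ω} {m : MeasurableSpace Ω}

lemma aux_key [IsProbabilityMeasure μ] (hm : m ≤ m0) (u : Ω → Fin d → ℝ)
    (N B : Ω → Matrix (Fin d) (Fin d) ℝ)
    (hu : ∀ k, Measurable[m] fun ω => u ω k)
    (hN : ∀ i j, Integrable (fun ω => N ω i j) μ)
    (hBpsd : ∀ ω, (B ω).PosSemidef)
    (hcond : ∀ᵐ ω ∂μ, LoewnerLE (matCondExp μ m N ω) (B ω))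
    (hqint : Integrable (fun ω => u ω ⬝ᵥ B ω *ᵥ u ω) μ)
    (R : ℝ) (s : Set Ω) (hs : MeasurableSet[m] s) :
    Integrable (fun ω => ({ω' | ∑ k, u ω' k ^ 2 ≤ R}.indicator (fun _ => (1:ℝ)) ω) *
        (u ω ⬝ᵥ N ω *ᵥ u ω)) μ ∧
      ∫ ω in s, ({ω' | ∑ k, u ω' k ^ 2 ≤ R}.indicator (fun _ => (1:ℝ)) ω) *
          (u ω ⬝ᵥ N ω *ᵥ u ω) ∂μ
        ≤ ∫ ω in s, u ω ⬝ᵥ B ω *ᵥ u ω ∂μ := by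
  haveI : SigmaFinite (μ.trim hm) := inferInstance
  set Bs : Set Ω := {ω' | ∑ k, u ω' k ^ 2 ≤ R} with hBsdef
  have hBsm : MeasurableSet[m] Bs := by
    have hsum : Measurable[m] fun ω => ∑ k, u ω k ^ 2 :=
      Finset.measurable_sum _ fun k _ => (hu k).pow measurable_const
    exact measurableSet_le hsum measurable_const
  set χ : Ω → ℝ := Bs.indicator (fun _ => 1) with hχdef
  have hχm : StronglyMeasurable[m] χ :=
    (stronglyMeasurable_const.indicator hBsm)
  have hχ_cases : ∀ ω, χ ω = 0 ∨ (χ ω = 1 ∧ ω ∈ Bs) := by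
    intro ω
    by_cases hω : ω ∈ Bs
    · exact Or.inr ⟨Set.indicator_of_mem hω _, hω⟩
    · exact Or.inl (Set.indicator_of_notMem hω _)
  set h : Fin d → Fin d → Ω → ℝ := fun k l ω => χ ω * (u ω k * u ω l) with hhdef
  have hhm : ∀ k l, StronglyMeasurable[m] (h k l) := fun k l =>
    hχm.mul (((hu k).stronglyMeasurable).mul ((hu l).stronglyMeasurable))
  have hhbd : ∀ k l ω, ‖h k l ω‖ ≤ max R 0 := by
    intro k l ω
    rcases hχ_cases ω with h0 | ⟨h1, hmem⟩
    · simp only [hhdef, h0, zero_mul, norm_zero]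
      exact le_max_of_le_right le_rfl
    · simp only [hhdef, h1, one_mul, Real.norm_eq_abs]
      have habs : |u ω k * u ω l| ≤ (u ω k ^ 2 + u ω l ^ 2) / 2 := by
        rw [abs_mul]
        nlinarith [sq_nonneg (|u ω k| - |u ω l|), sq_abs (u ω k), sq_abs (u ω l),
          abs_nonneg (u ω k), abs_nonneg (u ω l)]
      have hk2 : u ω k ^ 2 ≤ ∑ k', u ω k' ^ 2 :=
        Finset.single_le_sum (fun k' _ => sq_nonneg (u ω k')) (Finset.mem_univ k)
      have hl2 : u ω l ^ 2 ≤ ∑ k', u ω k' ^ 2 :=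
        Finset.single_le_sum (fun k' _ => sq_nonneg (u ω k')) (Finset.mem_univ l)
      have hR : ∑ k', u ω k' ^ 2 ≤ R := hmem
      calc |u ω k * u ω l| ≤ (u ω k ^ 2 + u ω l ^ 2) / 2 := habs
        _ ≤ ∑ k', u ω k' ^ 2 := by linarith
        _ ≤ R := hR
        _ ≤ max R 0 := le_max_left _ _
  have hexp : ∀ ω, χ ω * (u ω ⬝ᵥ N ω *ᵥ u ω) = ∑ k, ∑ l, h k l ω * N ω k l := by
    intro ω
    rw [quad_sum, Finset.mul_sum]
    refine Finset.sum_congr rfl fun k _ => ?_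
    rw [Finset.mul_sum]
    exact Finset.sum_congr rfl fun l _ => by simp only [hhdef]; ring
  have hterm_int : ∀ k l : Fin d, Integrable (fun ω => h k l ω * N ω k l) μ :=
    fun k l => (hN k l).bdd_mul ((hhm k l).mono hm).aestronglyMeasurable
      (Eventually.of_forall fun ω => hhbd k l ω)
  have hint1 : Integrable (fun ω => χ ω * (u ω ⬝ᵥ N ω *ᵥ u ω)) μ := by
    rw [show (fun ω => χ ω * (u ω ⬝ᵥ N ω *ᵥ u ω))
        = fun ω => ∑ k, ∑ l, h k l ω * N ω k l from funext hexp]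
    exact integrable_finset_sum _ fun k _ => integrable_finset_sum _ fun l _ => hterm_int k l
  refine ⟨hint1, ?_⟩
  -- conditional expectations
  have hce : ∀ k l : Fin d, (μ[fun ω => h k l ω * N ω k l | m])
      =ᵐ[μ] fun ω => h k l ω * (μ[fun ω' => N ω' k l | m]) ω := by
    intro k l
    have := condExp_mul_of_stronglyMeasurable_left (hhm k l)
      (by exact hterm_int k l) (hN k l)
    filter_upwards [this] with ω hω
    exact hω
  have hset : ∀ k l : Fin d, ∫ ω in s, h k l ω * N ω k l ∂μ
      = ∫ ω in s, h k l ω * (μ[fun ω' => N ω' k l | m]) ω ∂μ := by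
    intro k l
    rw [← setIntegral_condExp hm (hterm_int k l) hs]
    exact integral_congr_ae (ae_restrict_of_ae (hce k l))
  set G : Ω → ℝ := fun ω => ∑ k, ∑ l, h k l ω * (μ[fun ω' => N ω' k l | m]) ω with hGdef
  have hGint : Integrable G μ :=
    integrable_finset_sum _ fun k _ => integrable_finset_sum _ fun l _ =>
      integrable_condExp.bdd_mul ((hhm k l).mono hm).aestronglyMeasurable
        (Eventually.of_forall fun ω => hhbd k l ω)
  have hstep1 : ∫ ω in s, χ ω * (u ω ⬝ᵥ N ω *ᵥ u ω) ∂μ = ∫ ω in s, G ω ∂μ := by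
    rw [integral_congr_ae (ae_restrict_of_ae (Eventually.of_forall hexp))]
    rw [integral_finset_sum]
    · rw [show ∫ ω in s, G ω ∂μ = ∑ k, ∫ ω in s, ∑ l, h k l ω * (μ[fun ω' => N ω' k l | m]) ω ∂μ
          from integral_finset_sum _ fun k _ => (integrable_finset_sum _ fun l _ =>
            integrable_condExp.bdd_mul ((hhm k l).mono hm).aestronglyMeasurable
              (Eventually.of_forall fun ω => hhbd k l ω)).restrict]
      refine Finset.sum_congr rfl fun k _ => ?_
      rw [integral_finset_sum _ fun l _ => (hterm_int k l).restrict,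
        integral_finset_sum _ fun l _ => (integrable_condExp.bdd_mul
          ((hhm k l).mono hm).aestronglyMeasurable (Eventually.of_forall fun ω => hhbd k l ω)).restrict]
      exact Finset.sum_congr rfl fun l _ => hset k l
    · exact fun k _ => (integrable_finset_sum _ fun l _ => hterm_int k l).restrict
  have hGle : ∀ᵐ ω ∂μ, G ω ≤ u ω ⬝ᵥ B ω *ᵥ u ω := by
    filter_upwards [hcond] with ω hω
    have hG : G ω = χ ω * (u ω ⬝ᵥ matCondExp μ m N ω *ᵥ u ω) := by
      rw [quad_sum, Finset.mul_sum]
      refine Finset.sum_congr rfl fun k _ => ?_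
      rw [Finset.mul_sum]
      exact Finset.sum_congr rfl fun l _ => by simp only [hhdef, matCondExp, Matrix.of_apply]; ring
    have hle : u ω ⬝ᵥ matCondExp μ m N ω *ᵥ u ω ≤ u ω ⬝ᵥ B ω *ᵥ u ω := by
      have h0 := psd_quad hω (u ω)
      rw [Matrix.sub_mulVec, dotProduct_sub] at h0
      linarith
    have hBnn : 0 ≤ u ω ⬝ᵥ B ω *ᵥ u ω := psd_quad (hBpsd ω) (u ω)
    rw [hG]
    rcases hχ_cases ω with h0 | ⟨h1, _⟩
    · rw [h0, zero_mul]; exact hBnn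
    · rw [h1, one_mul]; exact hle
  calc ∫ ω in s, χ ω * (u ω ⬝ᵥ N ω *ᵥ u ω) ∂μ = ∫ ω in s, G ω ∂μ := hstep1
    _ ≤ ∫ ω in s, u ω ⬝ᵥ B ω *ᵥ u ω ∂μ :=
        integral_mono_ae hGint.restrict hqint.restrict (ae_restrict_of_ae hGle)

end Key


section Helpers

variable {Ω : Type*} {m0 : MeasurableSpace Ω} {μ : Measure Ω}

lemma quad_integrable {Y : Ω → Matrix (Fin d) (Fin d) ℝ}
    (h : ∀ i j, Integrable (fun ω => Y ω i j) μ) (v : Fin d → ℝ) :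
    Integrable (fun ω => v ⬝ᵥ Y ω *ᵥ v) μ := by
  rw [show (fun ω => v ⬝ᵥ Y ω *ᵥ v) = fun ω => ∑ k, ∑ l, v k * v l * Y ω k l from
    funext fun ω => quad_sum (Y ω) v]
  exact integrable_finset_sum _ fun k _ => integrable_finset_sum _ fun l _ =>
    (h k l).const_mul _

lemma measurable_quad {m : MeasurableSpace Ω} {u : Ω → Fin d → ℝ}
    {N : Ω → Matrix (Fin d) (Fin d) ℝ}
    (hu : ∀ k, Measurable[m] fun ω => u ω k) (hN : ∀ i j, Measurable[m] fun ω => N ω i j) :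
    Measurable[m] fun ω => u ω ⬝ᵥ N ω *ᵥ u ω := by
  rw [show (fun ω => u ω ⬝ᵥ N ω *ᵥ u ω) = fun ω => ∑ k, ∑ l, u ω k * u ω l * N ω k l from
    funext fun ω => quad_sum (N ω) (u ω)]
  exact Finset.measurable_sum _ fun k _ => Finset.measurable_sum _ fun l _ =>
    (((hu k).mul (hu l)).mul (hN k l))

/-- nonnegativity of a continuous quadratic form on a dense set extends everywhere -/
lemma quad_nonneg_of_dense {M : Matrix (Fin d) (Fin d) ℝ} {D : Set (Fin d → ℝ)}
    (hD : Dense D) (h : ∀ v ∈ D, 0 ≤ v ⬝ᵥ M *ᵥ v) (v : Fin d → ℝ) : 0 ≤ v ⬝ᵥ M *ᵥ v := by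
  have hcont : Continuous fun w : Fin d → ℝ => w ⬝ᵥ M *ᵥ w := by
    have : (fun w : Fin d → ℝ => w ⬝ᵥ M *ᵥ w) = fun w => ∑ k, ∑ l, w k * w l * M k l :=
      funext fun w => quad_sum M w
    rw [this]
    exact continuous_finset_sum _ fun k _ => continuous_finset_sum _ fun l _ =>
      (((continuous_apply k).mul (continuous_apply l)).mul continuous_const)
  have hclosed : IsClosed {w : Fin d → ℝ | 0 ≤ w ⬝ᵥ M *ᵥ w} :=
    isClosed_le continuous_const hcont
  have hsub : closure D ⊆ {w : Fin d → ℝ | 0 ≤ w ⬝ᵥ M *ᵥ w} :=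
    closure_minimal h hclosed
  exact hsub (hD v)

end Helpers


section Step

variable {Ω : Type*} {m0 : MeasurableSpace Ω} {μ : Measure Ω} {m : MeasurableSpace Ω}

lemma aux_step [IsProbabilityMeasure μ] (hm : m ≤ m0) (u : Ω → Fin d → ℝ)
    (N B : Ω → Matrix (Fin d) (Fin d) ℝ)
    (hu : ∀ k, Measurable[m] fun ω => u ω k)
    (hN : ∀ i j, Integrable (fun ω => N ω i j) μ)
    (hNpsd : ∀ ω, (N ω).PosSemidef)
    (hNm : ∀ i j, Measurable[m0] fun ω => N ω i j)
    (hBpsd : ∀ ω, (B ω).PosSemidef)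
    (hcond : ∀ᵐ ω ∂μ, LoewnerLE (matCondExp μ m N ω) (B ω))
    (hqB : Integrable (fun ω => u ω ⬝ᵥ B ω *ᵥ u ω) μ) :
    Integrable (fun ω => u ω ⬝ᵥ N ω *ᵥ u ω) μ ∧
      ∀ s : Set Ω, MeasurableSet[m] s →
        ∫ ω in s, u ω ⬝ᵥ N ω *ᵥ u ω ∂μ ≤ ∫ ω in s, u ω ⬝ᵥ B ω *ᵥ u ω ∂μ := by
  set g : Ω → ℝ := fun ω => u ω ⬝ᵥ N ω *ᵥ u ω with hgdef
  have hgnn : ∀ ω, 0 ≤ g ω := fun ω => psd_quad (hNpsd ω) (u ω)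
  have hgm : Measurable[m0] g :=
    measurable_quad (m := m0) (fun k => (hu k).mono hm le_rfl) hNm
  set χ : ℝ → Ω → ℝ := fun R => {ω' | ∑ k, u ω' k ^ 2 ≤ R}.indicator (fun _ => (1:ℝ)) with hχdef
  have hχm : ∀ R, Measurable[m0] (χ R) := by
    intro R
    have hset : MeasurableSet[m] {ω' | ∑ k, u ω' k ^ 2 ≤ R} :=
      measurableSet_le (Finset.measurable_sum _ fun k _ => (hu k).pow measurable_const)
        measurable_const
    exact measurable_const.indicator (hm _ hset)

  have hχ01 : ∀ R ω, 0 ≤ χ R ω ∧ χ R ω ≤ 1 := by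
    intro R ω
    constructor
    · exact Set.indicator_nonneg (fun _ _ => zero_le_one) ω
    · classical
      by_cases hω : ω ∈ {ω' | ∑ k, u ω' k ^ 2 ≤ R}
      · simp only [hχdef, Set.indicator_of_mem hω]; exact le_rfl
      · simp only [hχdef, Set.indicator_of_notMem hω]; exact zero_le_one
  have hχg_le : ∀ R ω, χ R ω * g ω ≤ g ω := fun R ω => by
    calc χ R ω * g ω ≤ 1 * g ω :=
          mul_le_mul_of_nonneg_right (hχ01 R ω).2 (hgnn ω)
      _ = g ω := one_mul _
  have hχg_nn : ∀ R ω, 0 ≤ χ R ω * g ω := fun R ω =>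
    mul_nonneg (hχ01 R ω).1 (hgnn ω)
  have key : ∀ R : ℝ, ∀ s : Set Ω, MeasurableSet[m] s →
      Integrable (fun ω => χ R ω * g ω) μ ∧
        ∫ ω in s, χ R ω * g ω ∂μ ≤ ∫ ω in s, u ω ⬝ᵥ B ω *ᵥ u ω ∂μ :=
    fun R s hs => aux_key hm u N B hu hN hBpsd hcond hqB R s hs
  have heventually : ∀ ω, ∀ R : ℕ, (⌈∑ k, u ω k ^ 2⌉₊ : ℕ) ≤ R → χ (R:ℝ) ω * g ω = g ω := by
    intro ω R hR
    have hmem : ω ∈ {ω' | ∑ k, u ω' k ^ 2 ≤ (R:ℝ)} := by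
      have h1 : ∑ k, u ω k ^ 2 ≤ (⌈∑ k, u ω k ^ 2⌉₊ : ℝ) := Nat.le_ceil _
      exact h1.trans (Nat.cast_le.mpr hR)
    simp only [hχdef, Set.indicator_of_mem hmem, one_mul]
  -- integrability of g via monotone convergence
  have hgint : Integrable g μ := by
    have hc : ∀ R : ℕ, ∫⁻ ω, ENNReal.ofReal (χ (R:ℝ) ω * g ω) ∂μ
        ≤ ENNReal.ofReal (∫ ω, u ω ⬝ᵥ B ω *ᵥ u ω ∂μ) := by
      intro R
      rw [← ofReal_integral_eq_lintegral_ofReal ((key R Set.univ MeasurableSet.univ).1)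
        (Eventually.of_forall fun ω => hχg_nn R ω)]
      refine ENNReal.ofReal_le_ofReal ?_
      have h2 := (key (R:ℝ) Set.univ MeasurableSet.univ).2
      rwa [Measure.restrict_univ] at h2
    have hsup : ∀ ω, (⨆ R : ℕ, ENNReal.ofReal (χ (R:ℝ) ω * g ω)) = ENNReal.ofReal (g ω) := by
      intro ω
      refine le_antisymm (iSup_le fun R => ENNReal.ofReal_le_ofReal (hχg_le _ ω)) ?_
      exact le_iSup_of_le ⌈∑ k, u ω k ^ 2⌉₊
        (le_of_eq (congrArg ENNReal.ofReal (heventually ω _ le_rfl)).symm)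
    have hmono : Monotone fun R : ℕ => fun ω => ENNReal.ofReal (χ (R:ℝ) ω * g ω) := by
      intro R R' hRR'
      intro ω
      refine ENNReal.ofReal_le_ofReal (mul_le_mul_of_nonneg_right ?_ (hgnn ω))
      rw [hχdef]
      classical
      by_cases hω : ω ∈ {ω' | ∑ k, u ω' k ^ 2 ≤ (R:ℝ)}
      · have hω' : ω ∈ {ω' | ∑ k, u ω' k ^ 2 ≤ (R':ℝ)} := by
          have h1 : ∑ k, u ω k ^ 2 ≤ (R:ℝ) := hω
          exact Set.mem_setOf_eq ▸ le_trans h1 (Nat.cast_le.mpr hRR')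
        simp only [Set.indicator_of_mem hω, Set.indicator_of_mem hω', le_refl]
      · simp only [Set.indicator_of_notMem hω]
        exact Set.indicator_nonneg (fun _ _ => zero_le_one) ω
    have hlin : ∫⁻ ω, ENNReal.ofReal (g ω) ∂μ
        ≤ ENNReal.ofReal (∫ ω, u ω ⬝ᵥ B ω *ᵥ u ω ∂μ) := by
      have h1 : ∫⁻ ω, ENNReal.ofReal (g ω) ∂μ
          = ∫⁻ ω, ⨆ R : ℕ, ENNReal.ofReal (χ (R:ℝ) ω * g ω) ∂μ := by
        refine lintegral_congr fun ω => (hsup ω).symm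
      have hmeasR : ∀ R : ℕ, Measurable[m0] fun ω => ENNReal.ofReal (χ (R:ℝ) ω * g ω) :=
        fun R => ((hχm _).mul hgm).ennreal_ofReal
      rw [h1, lintegral_iSup hmeasR hmono]
      exact iSup_le hc
    refine ⟨(hgm.aestronglyMeasurable : AEStronglyMeasurable[m0] g μ), ?_⟩
    rw [hasFiniteIntegral_iff_ofReal (Eventually.of_forall hgnn)]
    exact lt_of_le_of_lt hlin ENNReal.ofReal_lt_top
  refine ⟨hgint, ?_⟩
  intro s hs
  -- dominated convergence over s
  have htend : Tendsto (fun R : ℕ => ∫ ω in s, χ (R:ℝ) ω * g ω ∂μ) atTop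
      (nhds (∫ ω in s, g ω ∂μ)) := by
    refine tendsto_integral_of_dominated_convergence g
      (fun R => ((hχm _).mul hgm).aestronglyMeasurable.restrict)
      hgint.restrict ?_ ?_
    · intro R
      refine Eventually.of_forall fun ω => ?_
      rw [Real.norm_eq_abs, abs_of_nonneg (hχg_nn _ ω)]
      exact hχg_le _ ω
    · refine Eventually.of_forall fun ω => ?_
      exact tendsto_atTop_of_eventually_const (heventually ω)
  refine le_of_tendsto htend (Eventually.of_forall fun R => (key (R:ℝ) s hs).2)

end Step


lemma herm_entry_symm {M : Matrix (Fin d) (Fin d) ℝ} (h : M.IsHermitian) (i j : Fin d) :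
    M i j = M j i := by
  have hc := congrFun (congrFun h i) j
  simp only [Matrix.conjTranspose_apply, star_trivial] at hc
  exact hc.symm



end Aux

/-- **Construction of matrix test supermartingales.**
If for each `n ≥ 1`, `Eₙ` is `ℱ n`-measurable positive semidefinite, `Aₙ` is
`ℱ (n-1)`-measurable positive definite, and `E(Eₙ | ℱ (n-1)) ⪯ Aₙ⁻¹` a.s., then
`Yₙ = Pₙ Pₙᵀ` with `Pₙ = A₁^{1/2} E₁^{1/2} ⋯ Aₙ^{1/2} Eₙ^{1/2}` (and `Y₀ = I`) is a matrix
supermartingale. -/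
theorem stmt12 {Ω : Type*} {m0 : MeasurableSpace Ω} (μ : Measure Ω) [IsProbabilityMeasure μ]
    {d : ℕ} (ℱ : Filtration ℕ m0)
    (E A : ℕ → Ω → Matrix (Fin d) (Fin d) ℝ)
    (hEmeas : ∀ n, 1 ≤ n → ∀ i j, StronglyMeasurable[ℱ n] fun ω => E n ω i j)
    (hEint : ∀ n, 1 ≤ n → ∀ i j, Integrable (fun ω => E n ω i j) μ)
    (hEpsd : ∀ n, 1 ≤ n → ∀ ω, (E n ω).PosSemidef)
    (hAmeas : ∀ n, 1 ≤ n → ∀ i j, StronglyMeasurable[ℱ (n - 1)] fun ω => A n ω i j)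
    (hApd : ∀ n, 1 ≤ n → ∀ ω, (A n ω).PosDef)
    (hcond : ∀ n, 1 ≤ n →
      ∀ᵐ ω ∂μ, LoewnerLE (matCondExp μ (ℱ (n - 1)) (E n) ω) (A n ω)⁻¹) :
    IsMatrixSupermartingale ℱ μ (fun n ω =>
      (((List.range n).map fun i => matSqrt (A (i + 1) ω) * matSqrt (E (i + 1) ω)).prod) *
      (((List.range n).map fun i => matSqrt (A (i + 1) ω) * matSqrt (E (i + 1) ω)).prod)ᵀ) := by

  classical
  set P : ℕ → Ω → Matrix (Fin d) (Fin d) ℝ := fun n ω =>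
    ((List.range n).map fun i => matSqrt (A (i + 1) ω) * matSqrt (E (i + 1) ω)).prod with hPdef
  show IsMatrixSupermartingale ℱ μ (fun n ω => P n ω * (P n ω)ᵀ)
  have hone : ∀ n : ℕ, 1 ≤ n + 1 := fun n => Nat.le_add_left 1 n
  have hPsucc : ∀ (n : ℕ) (ω : Ω),
      P (n+1) ω = P n ω * (matSqrt (A (n+1) ω) * matSqrt (E (n+1) ω)) := by
    intro n ω
    simp only [hPdef, List.range_succ, List.map_append, List.prod_append, List.map_cons,
      List.prod_cons, List.map_nil, List.prod_nil, Matrix.mul_one]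
  have hP0 : ∀ ω, P 0 ω = 1 := fun ω => by
    simp only [hPdef, List.range_zero, List.map_nil, List.prod_nil]
  -- measurability of the sqrt factors
  have hEm : ∀ n : ℕ, ∀ i j, Measurable[ℱ (n+1)] fun ω => E (n+1) ω i j :=
    fun n i j => (hEmeas (n+1) (hone n) i j).measurable
  have hAm : ∀ n : ℕ, ∀ i j, Measurable[ℱ n] fun ω => A (n+1) ω i j := by
    intro n i j
    have h1 := (hAmeas (n+1) (hone n) i j).measurable
    simpa [Nat.add_sub_cancel] using h1
  have hSE : ∀ n : ℕ, ∀ i j, Measurable[ℱ (n+1)] fun ω => matSqrt (E (n+1) ω) i j :=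
    fun n => measurable_matSqrt_entry (hEm n) (fun ω => hEpsd (n+1) (hone n) ω)
  have hSA : ∀ n : ℕ, ∀ i j, Measurable[ℱ n] fun ω => matSqrt (A (n+1) ω) i j :=
    fun n => measurable_matSqrt_entry (hAm n) (fun ω => (hApd (n+1) (hone n) ω).posSemidef)
  have hmul : ∀ {m' : MeasurableSpace Ω} {B C : Ω → Matrix (Fin d) (Fin d) ℝ},
      (∀ i j, Measurable[m'] fun ω => B ω i j) → (∀ i j, Measurable[m'] fun ω => C ω i j) →
      ∀ i j, Measurable[m'] fun ω => (B ω * C ω) i j := by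
    intro m' B C hB hC i j
    have heq : (fun ω => (B ω * C ω) i j) = fun ω => ∑ l, B ω i l * C ω l j :=
      funext fun ω => Matrix.mul_apply
    rw [heq]
    exact Finset.measurable_sum _ fun l _ => (hB i l).mul (hC l j)
  have hPm : ∀ n, ∀ i j, Measurable[ℱ n] fun ω => P n ω i j := by
    intro n
    induction n with
    | zero =>
        intro i j
        have heq : (fun ω => P 0 ω i j) = fun _ => (1 : Matrix (Fin d) (Fin d) ℝ) i j :=
          funext fun ω => by rw [hP0]
        rw [heq]
        exact measurable_const
    | succ n ih =>
        intro i j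
        have h1 : ∀ i j, Measurable[ℱ (n+1)]
            fun ω => (matSqrt (A (n+1) ω) * matSqrt (E (n+1) ω)) i j :=
          hmul (fun i j => (hSA n i j).mono (ℱ.mono (Nat.le_succ n)) le_rfl) (hSE n)
        have h2 := hmul (fun i j => (ih i j).mono (ℱ.mono (Nat.le_succ n)) le_rfl) h1 i j
        have heq : (fun ω => P (n+1) ω i j)
            = fun ω => (P n ω * (matSqrt (A (n+1) ω) * matSqrt (E (n+1) ω))) i j :=
          funext fun ω => by rw [hPsucc]
        rw [heq]
        exact h2
  have hYm : ∀ n, ∀ i j, Measurable[ℱ n] fun ω => (P n ω * (P n ω)ᵀ) i j := by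
    intro n
    exact hmul (hPm n) (fun i j => hPm n j i)
  have hherm : ∀ n ω, (P n ω * (P n ω)ᵀ).IsHermitian := by
    intro n ω
    rw [← conjTranspose_eq_transpose_of_trivial]
    exact isHermitian_mul_conjTranspose_self _
  -- the key identities
  have idY1 : ∀ (n : ℕ) (v : Fin d → ℝ) (ω : Ω),
      v ⬝ᵥ (P (n+1) ω * (P (n+1) ω)ᵀ) *ᵥ v
        = ((P n ω * matSqrt (A (n+1) ω))ᵀ *ᵥ v) ⬝ᵥ E (n+1) ω *ᵥ
            ((P n ω * matSqrt (A (n+1) ω))ᵀ *ᵥ v) := by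
    intro n v ω
    have hM : P (n+1) ω * (P (n+1) ω)ᵀ
        = (P n ω * matSqrt (A (n+1) ω)) * E (n+1) ω * (P n ω * matSqrt (A (n+1) ω))ᵀ := by
      simp only [hPsucc, Matrix.transpose_mul, matSqrt_transpose, Matrix.mul_assoc]
      rw [show matSqrt (E (n+1) ω) * (matSqrt (E (n+1) ω)
            * (matSqrt (A (n+1) ω) * (P n ω)ᵀ))
          = E (n+1) ω * (matSqrt (A (n+1) ω) * (P n ω)ᵀ) from by
        rw [← Matrix.mul_assoc, matSqrt_mul_self (hEpsd (n+1) (hone n) ω)]]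
    rw [hM, quad_transform]
  have idY2 : ∀ (n : ℕ) (v : Fin d → ℝ) (ω : Ω),
      v ⬝ᵥ (P n ω * (P n ω)ᵀ) *ᵥ v
        = ((P n ω * matSqrt (A (n+1) ω))ᵀ *ᵥ v) ⬝ᵥ (A (n+1) ω)⁻¹ *ᵥ
            ((P n ω * matSqrt (A (n+1) ω))ᵀ *ᵥ v) := by
    intro n v ω
    rw [← quad_transform]
    congr 1
    simp only [Matrix.transpose_mul, matSqrt_transpose, Matrix.mul_assoc]
    rw [show matSqrt (A (n+1) ω) * ((A (n+1) ω)⁻¹ * (matSqrt (A (n+1) ω) * (P n ω)ᵀ))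
        = (P n ω)ᵀ from by
      rw [← Matrix.mul_assoc, ← Matrix.mul_assoc, matSqrt_mul_inv_mul (hApd (n+1) (hone n) ω),
        Matrix.one_mul]]
  -- measurability of u
  have hum : ∀ (n : ℕ) (v : Fin d → ℝ) (k : Fin d),
      Measurable[ℱ n] fun ω => ((P n ω * matSqrt (A (n+1) ω))ᵀ *ᵥ v) k := by
    intro n v k
    have heq : (fun ω => ((P n ω * matSqrt (A (n+1) ω))ᵀ *ᵥ v) k)
        = fun ω => ∑ l, (P n ω * matSqrt (A (n+1) ω)) l k * v l := by
      funext ω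
      simp [Matrix.mulVec, dotProduct, Matrix.transpose_apply]
    rw [heq]
    exact Finset.measurable_sum _ fun l _ =>
      (hmul (hPm n) (hSA n) l k).mul measurable_const
  -- conditional hypothesis at level n
  have hcond' : ∀ n : ℕ, ∀ᵐ ω ∂μ,
      LoewnerLE (matCondExp μ (ℱ n) (E (n+1)) ω) ((A (n+1) ω)⁻¹) := by
    intro n
    have h1 := hcond (n+1) (hone n)
    simpa [Nat.add_sub_cancel] using h1
  have hBpsd : ∀ (n : ℕ) (ω : Ω), ((A (n+1) ω)⁻¹).PosSemidef :=
    fun n ω => ((hApd (n+1) (hone n) ω).inv).posSemidef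
  have hNint : ∀ n : ℕ, ∀ i j, Integrable (fun ω => E (n+1) ω i j) μ :=
    fun n => hEint (n+1) (hone n)
  have hNm0 : ∀ n : ℕ, ∀ i j, Measurable[m0] fun ω => E (n+1) ω i j :=
    fun n i j => (hEm n i j).mono (ℱ.le (n+1)) le_rfl
  -- integrability of entries, by induction
  have eint : ∀ n, ∀ i j, Integrable (fun ω => (P n ω * (P n ω)ᵀ) i j) μ := by
    intro n
    induction n with
    | zero =>
        intro i j
        have heq : (fun ω => (P 0 ω * (P 0 ω)ᵀ) i j)
            = fun _ => ((1 : Matrix (Fin d) (Fin d) ℝ) * (1 : Matrix (Fin d) (Fin d) ℝ)ᵀ) i j :=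
          funext fun ω => by rw [hP0]
        rw [heq]
        exact integrable_const _
    | succ n ih =>
        have hq : ∀ v : Fin d → ℝ,
            Integrable (fun ω => v ⬝ᵥ (P (n+1) ω * (P (n+1) ω)ᵀ) *ᵥ v) μ := by
          intro v
          have hqB : Integrable (fun ω => ((P n ω * matSqrt (A (n+1) ω))ᵀ *ᵥ v) ⬝ᵥ
              (A (n+1) ω)⁻¹ *ᵥ ((P n ω * matSqrt (A (n+1) ω))ᵀ *ᵥ v)) μ := by
            have h1 := quad_integrable (μ := μ) ih v
            rw [show (fun ω => v ⬝ᵥ (P n ω * (P n ω)ᵀ) *ᵥ v)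
                = fun ω => ((P n ω * matSqrt (A (n+1) ω))ᵀ *ᵥ v) ⬝ᵥ (A (n+1) ω)⁻¹ *ᵥ
                    ((P n ω * matSqrt (A (n+1) ω))ᵀ *ᵥ v) from funext fun ω => idY2 n v ω] at h1
            exact h1
          have hstep := aux_step (ℱ.le n) (fun ω => (P n ω * matSqrt (A (n+1) ω))ᵀ *ᵥ v)
            (E (n+1)) (fun ω => (A (n+1) ω)⁻¹) (hum n v) (hNint n)
            (fun ω => hEpsd (n+1) (hone n) ω) (hNm0 n) (hBpsd n) (hcond' n) hqB
          have h2 := hstep.1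
          rw [show (fun ω => v ⬝ᵥ (P (n+1) ω * (P (n+1) ω)ᵀ) *ᵥ v)
              = fun ω => ((P n ω * matSqrt (A (n+1) ω))ᵀ *ᵥ v) ⬝ᵥ E (n+1) ω *ᵥ
                  ((P n ω * matSqrt (A (n+1) ω))ᵀ *ᵥ v) from funext fun ω => idY1 n v ω]
          exact h2
        -- polarization
        intro i j
        have heq : (fun ω => (P (n+1) ω * (P (n+1) ω)ᵀ) i j)
            = fun ω => ((Pi.single i (1:ℝ) + Pi.single j 1) ⬝ᵥ (P (n+1) ω * (P (n+1) ω)ᵀ) *ᵥ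
                (Pi.single i (1:ℝ) + Pi.single j 1)
              - Pi.single i (1:ℝ) ⬝ᵥ (P (n+1) ω * (P (n+1) ω)ᵀ) *ᵥ Pi.single i (1:ℝ)
              - Pi.single j (1:ℝ) ⬝ᵥ (P (n+1) ω * (P (n+1) ω)ᵀ) *ᵥ Pi.single j (1:ℝ)) / 2 :=
          funext fun ω => entry_eq_quads (hherm (n+1) ω) i j
        rw [heq]
        exact (((hq _).sub (hq _)).sub (hq _)).div_const 2
  -- hermitian property of the conditional expectation matrix
  have hCEherm : ∀ (n : ℕ) (ω : Ω),
      (matCondExp μ (ℱ n) (fun ω' => P (n+1) ω' * (P (n+1) ω')ᵀ) ω).IsHermitian := by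
    intro n ω
    refine Matrix.ext fun i j => ?_
    simp only [Matrix.conjTranspose_apply, star_trivial, matCondExp, Matrix.of_apply]
    congr 1
    funext ω'
    exact herm_entry_symm (hherm (n+1) ω') j i
  -- the supermartingale inequality
  have hsuper : ∀ n, ∀ᵐ ω ∂μ,
      LoewnerLE (matCondExp μ (ℱ n) (fun ω' => P (n+1) ω' * (P (n+1) ω')ᵀ) ω)
        (P n ω * (P n ω)ᵀ) := by
    intro n
    haveI : SigmaFinite (μ.trim (ℱ.le n)) := inferInstance
    obtain ⟨D, hDc, hDd⟩ := TopologicalSpace.exists_countable_dense (Fin d → ℝ)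
    have haev : ∀ v : Fin d → ℝ, ∀ᵐ ω ∂μ,
        v ⬝ᵥ (matCondExp μ (ℱ n) (fun ω' => P (n+1) ω' * (P (n+1) ω')ᵀ) ω) *ᵥ v
          ≤ v ⬝ᵥ (P n ω * (P n ω)ᵀ) *ᵥ v := by
      intro v
      set LHSf : Ω → ℝ := fun ω =>
        v ⬝ᵥ (matCondExp μ (ℱ n) (fun ω' => P (n+1) ω' * (P (n+1) ω')ᵀ) ω) *ᵥ v with hLdef
      set RHSf : Ω → ℝ := fun ω => v ⬝ᵥ (P n ω * (P n ω)ᵀ) *ᵥ v with hRdef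
      have hLHS_eq : LHSf = fun ω => ∑ k, ∑ l,
          v k * v l * (μ[fun ω' => (P (n+1) ω' * (P (n+1) ω')ᵀ) k l | ℱ n]) ω := by
        funext ω
        rw [hLdef]
        exact quad_sum _ v
      have hLm : StronglyMeasurable[ℱ n] LHSf := by
        rw [hLHS_eq]
        exact Finset.stronglyMeasurable_fun_sum _ fun k _ =>
          Finset.stronglyMeasurable_fun_sum _ fun l _ => (StronglyMeasurable.const_mul (β := ℝ) stronglyMeasurable_condExp _)
      have hLint : Integrable LHSf μ := by
        rw [hLHS_eq]
        exact integrable_finset_sum _ fun k _ => integrable_finset_sum _ fun l _ =>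
          integrable_condExp.const_mul _
      have hRm : StronglyMeasurable[ℱ n] RHSf := by
        rw [hRdef]
        exact (measurable_quad (m := ℱ n) (u := fun _ => v)
          (fun k => measurable_const) (hYm n)).stronglyMeasurable
      have hRint : Integrable RHSf μ := quad_integrable (eint n) v
      have hswap : ∀ (s : Set Ω) (f : Fin d → Fin d → Ω → ℝ), (∀ k l, Integrable (f k l) μ) →
          ∫ ω in s, ∑ k, ∑ l, f k l ω ∂μ = ∑ k, ∑ l, ∫ ω in s, f k l ω ∂μ := by
        intro s f hf
        rw [integral_finset_sum _ fun k _ =>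
          (integrable_finset_sum _ fun l _ => hf k l).restrict]
        exact Finset.sum_congr rfl fun k _ =>
          integral_finset_sum _ fun l _ => (hf k l).restrict
      have hsetle : ∀ s : Set Ω, MeasurableSet[ℱ n] s →
          ∫ ω in s, LHSf ω ∂μ ≤ ∫ ω in s, RHSf ω ∂μ := by
        intro s hs
        have hLset : ∫ ω in s, LHSf ω ∂μ
            = ∫ ω in s, v ⬝ᵥ (P (n+1) ω * (P (n+1) ω)ᵀ) *ᵥ v ∂μ := by
          rw [hLHS_eq, hswap s _ (fun k l => integrable_condExp.const_mul _)]
          rw [show (fun ω => v ⬝ᵥ (P (n+1) ω * (P (n+1) ω)ᵀ) *ᵥ v)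
              = fun ω => ∑ k, ∑ l, v k * v l * (P (n+1) ω * (P (n+1) ω)ᵀ) k l from
            funext fun ω => quad_sum _ v]
          rw [hswap s _ (fun k l => (eint (n+1) k l).const_mul _)]
          refine Finset.sum_congr rfl fun k _ => Finset.sum_congr rfl fun l _ => ?_
          rw [integral_const_mul, integral_const_mul,
            setIntegral_condExp (ℱ.le n) (eint (n+1) k l) hs]
        have hRset : ∫ ω in s, RHSf ω ∂μ
            = ∫ ω in s, ((P n ω * matSqrt (A (n+1) ω))ᵀ *ᵥ v) ⬝ᵥ (A (n+1) ω)⁻¹ *ᵥ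
                ((P n ω * matSqrt (A (n+1) ω))ᵀ *ᵥ v) ∂μ := by
          refine integral_congr_ae (ae_restrict_of_ae (Eventually.of_forall fun ω => ?_))
          rw [hRdef]
          exact idY2 n v ω
        have hqB : Integrable (fun ω => ((P n ω * matSqrt (A (n+1) ω))ᵀ *ᵥ v) ⬝ᵥ
            (A (n+1) ω)⁻¹ *ᵥ ((P n ω * matSqrt (A (n+1) ω))ᵀ *ᵥ v)) μ := by
          have h1 := hRint
          rw [hRdef] at h1
          rw [show (fun ω => v ⬝ᵥ (P n ω * (P n ω)ᵀ) *ᵥ v)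
              = fun ω => ((P n ω * matSqrt (A (n+1) ω))ᵀ *ᵥ v) ⬝ᵥ (A (n+1) ω)⁻¹ *ᵥ
                  ((P n ω * matSqrt (A (n+1) ω))ᵀ *ᵥ v) from
            funext fun ω => idY2 n v ω] at h1
          exact h1
        have hstep := (aux_step (ℱ.le n) (fun ω => (P n ω * matSqrt (A (n+1) ω))ᵀ *ᵥ v)
          (E (n+1)) (fun ω => (A (n+1) ω)⁻¹) (hum n v) (hNint n)
          (fun ω => hEpsd (n+1) (hone n) ω) (hNm0 n) (hBpsd n) (hcond' n) hqB).2 s hs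
        have hLset2 : ∫ ω in s, v ⬝ᵥ (P (n+1) ω * (P (n+1) ω)ᵀ) *ᵥ v ∂μ
            = ∫ ω in s, ((P n ω * matSqrt (A (n+1) ω))ᵀ *ᵥ v) ⬝ᵥ E (n+1) ω *ᵥ
                ((P n ω * matSqrt (A (n+1) ω))ᵀ *ᵥ v) ∂μ :=
          integral_congr_ae (ae_restrict_of_ae (Eventually.of_forall fun ω => idY1 n v ω))
        rw [hLset, hLset2, hRset]
        exact hstep
      have hle_trim : LHSf ≤ᵐ[μ.trim (ℱ.le n)] RHSf := by
        refine ae_le_of_forall_setIntegral_le (hLint.trim (ℱ.le n) hLm)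
          (hRint.trim (ℱ.le n) hRm) ?_
        intro s hs _
        rw [← setIntegral_trim (ℱ.le n) hLm hs, ← setIntegral_trim (ℱ.le n) hRm hs]
        exact hsetle s hs
      exact ae_le_of_ae_le_trim hle_trim
    have hae := (ae_ball_iff hDc).2 fun v _ => haev v
    filter_upwards [hae] with ω hω
    show Matrix.PosSemidef _
    refine posSemidef_of_quad ((hherm n ω).sub (hCEherm n ω))
      (quad_nonneg_of_dense hDd (fun w hw => ?_))
    rw [Matrix.sub_mulVec, dotProduct_sub, sub_nonneg]
    exact hω w hw
  exact ⟨hherm, fun n i j => (hYm n i j).stronglyMeasurable, eint, hsuper⟩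


end
end

section
/- Let X be a random d×d real symmetric matrix with mean E[X] = M and variance bound E[(X − M)²] ⪯ V, and let γ be a real number. Then E[ exp( γ(X − M) − (γ²/6)(X − M)² ) ] ⪯ exp( (γ²/3) V ). -/
open MeasureTheory ProbabilityTheory Matrix Filter

noncomputable section

section AuxLemmas

open MeasureTheory Matrix

lemma deriv_aux' (x : ℝ) : HasDerivAt (fun x : ℝ => (1 + x + x^2/3) * Real.exp (-x + x^2/6))
    (x^3/9 * Real.exp (-x + x^2/6)) x := by
  have h1 : HasDerivAt (fun x : ℝ => 1 + x + x^2/3) (1 + 2*x/3) x := by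
    have := ((hasDerivAt_id x).const_add 1).add ((hasDerivAt_pow 2 x).div_const 3)
    exact this.congr_deriv (by push_cast; ring)
  have h2 : HasDerivAt (fun x : ℝ => -x + x^2/6) (-1 + 2*x/6) x := by
    have := ((hasDerivAt_id x).neg).add ((hasDerivAt_pow 2 x).div_const 6)
    exact this.congr_deriv (by push_cast; ring)
  have := h1.mul h2.exp
  exact this.congr_deriv (by ring)

lemma scalar_key (x : ℝ) : Real.exp (x - x^2/6) ≤ 1 + x + x^2/3 := by
  set F : ℝ → ℝ := fun x => (1 + x + x^2/3) * Real.exp (-x + x^2/6) with hF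
  have hd : ∀ y, HasDerivAt F (y^3/9 * Real.exp (-y + y^2/6)) y := deriv_aux'
  have hdd : ∀ y, deriv F y = y^3/9 * Real.exp (-y + y^2/6) := fun y => (hd y).deriv
  have hFone : 1 ≤ F x := by
    rcases le_total 0 x with hx | hx
    · have hm : MonotoneOn F (Set.Ici 0) := by
        apply monotoneOn_of_deriv_nonneg (convex_Ici 0)
          (Continuous.continuousOn (by fun_prop))
          (fun y _ => (hd y).differentiableAt.differentiableWithinAt)
        intro y hy
        rw [hdd]
        have : (0:ℝ) ≤ y := le_of_lt (by simpa using hy)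
        positivity
      have := hm (Set.self_mem_Ici) (Set.mem_Ici.2 hx) hx
      simpa [hF] using this
    · have hm : AntitoneOn F (Set.Iic 0) := by
        apply antitoneOn_of_deriv_nonpos (convex_Iic 0)
          (Continuous.continuousOn (by fun_prop))
          (fun y _ => (hd y).differentiableAt.differentiableWithinAt)
        intro y hy
        rw [hdd]
        have hy0 : y < 0 := by simpa using hy
        have h3 : y^3/9 ≤ 0 := by
          have : y^3 ≤ 0 := by
            rw [pow_succ]
            exact mul_nonpos_of_nonneg_of_nonpos (sq_nonneg y) hy0.le
          linarith
        exact mul_nonpos_of_nonpos_of_nonneg h3 (Real.exp_pos _).le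
      have := hm (Set.mem_Iic.2 hx) (Set.self_mem_Iic) hx
      simpa [hF] using this
  calc Real.exp (x - x^2/6) = Real.exp (x - x^2/6) * 1 := by ring
    _ ≤ Real.exp (x - x^2/6) * F x :=
        mul_le_mul_of_nonneg_left hFone (Real.exp_pos _).le
    _ = (1 + x + x^2/3) * (Real.exp (x - x^2/6) * Real.exp (-x + x^2/6)) := by rw [hF]; ring
    _ = 1 + x + x^2/3 := by rw [← Real.exp_add]; norm_num

variable {d : ℕ}

lemma star_mul_self_eig {Y : Matrix (Fin d) (Fin d) ℝ} (hY : Y.IsHermitian) :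
    star (hY.eigenvectorUnitary : Matrix (Fin d) (Fin d) ℝ) *
      (hY.eigenvectorUnitary : Matrix (Fin d) (Fin d) ℝ) = 1 :=
  Unitary.coe_star_mul_self _

lemma mul_star_self_eig {Y : Matrix (Fin d) (Fin d) ℝ} (hY : Y.IsHermitian) :
    (hY.eigenvectorUnitary : Matrix (Fin d) (Fin d) ℝ) *
      star (hY.eigenvectorUnitary : Matrix (Fin d) (Fin d) ℝ) = 1 :=
  Unitary.coe_mul_star_self _

lemma spec_real {Y : Matrix (Fin d) (Fin d) ℝ} (hY : Y.IsHermitian) :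
    Y = (hY.eigenvectorUnitary : Matrix (Fin d) (Fin d) ℝ) *
        diagonal (fun i => hY.eigenvalues i) *
        star (hY.eigenvectorUnitary : Matrix (Fin d) (Fin d) ℝ) := by
  have := hY.spectral_theorem
  simpa [Function.comp] using this

lemma rep_quad {Y : Matrix (Fin d) (Fin d) ℝ} (hY : Y.IsHermitian) (a b c : ℝ) :
    a • (1 : Matrix (Fin d) (Fin d) ℝ) + b • Y + c • (Y * Y) =
      (hY.eigenvectorUnitary : Matrix (Fin d) (Fin d) ℝ) *
        diagonal (fun i => a + b * hY.eigenvalues i + c * (hY.eigenvalues i)^2) *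
        star (hY.eigenvectorUnitary : Matrix (Fin d) (Fin d) ℝ) := by
  set U := (hY.eigenvectorUnitary : Matrix (Fin d) (Fin d) ℝ) with hU
  have h1 : star U * U = 1 := star_mul_self_eig hY
  have h2 : U * star U = 1 := mul_star_self_eig hY
  have hsq : Y * Y = U * diagonal (fun i => (hY.eigenvalues i)^2) * star U := by
    conv_lhs => rw [spec_real hY]
    have e1 : (U * diagonal (fun i => hY.eigenvalues i) * star U) *
        (U * diagonal (fun i => hY.eigenvalues i) * star U)
        = U * (diagonal (fun i => hY.eigenvalues i) * ((star U * U) *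
          diagonal (fun i => hY.eigenvalues i))) * star U := by
      simp only [Matrix.mul_assoc]
    rw [← hU, e1, h1, one_mul, diagonal_mul_diagonal]
    congr 2
    ext i
    ring
  have hone : (1 : Matrix (Fin d) (Fin d) ℝ) = U * diagonal (fun _ => (1:ℝ)) * star U := by
    rw [diagonal_one, mul_one, h2]
  symm
  calc U * diagonal (fun i => a + b * hY.eigenvalues i + c * (hY.eigenvalues i)^2) * star U
      = U * (diagonal (fun _ => a * 1) + diagonal (fun i => b * hY.eigenvalues i)
          + diagonal (fun i => c * (hY.eigenvalues i)^2)) * star U := by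
        rw [← diagonal_add, ← diagonal_add]
        congr 2
        ext i
        ring
    _ = a • (U * diagonal (fun _ => (1:ℝ)) * star U)
        + b • (U * diagonal (fun i => hY.eigenvalues i) * star U)
        + c • (U * diagonal (fun i => (hY.eigenvalues i)^2) * star U) := by
        have da : diagonal (fun _ : Fin d => a * 1) = a • diagonal (fun _ : Fin d => (1:ℝ)) := by
          rw [← diagonal_smul]; rfl
        have db : diagonal (fun i => b * hY.eigenvalues i)
            = b • diagonal (fun i => hY.eigenvalues i) := by
          rw [← diagonal_smul]; rfl
        have dc : diagonal (fun i => c * (hY.eigenvalues i)^2)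
            = c • diagonal (fun i => (hY.eigenvalues i)^2) := by
          rw [← diagonal_smul]; rfl
        rw [da, db, dc, Matrix.mul_add, Matrix.mul_add, Matrix.add_mul, Matrix.add_mul,
          Matrix.mul_smul, Matrix.mul_smul, Matrix.mul_smul,
          Matrix.smul_mul, Matrix.smul_mul, Matrix.smul_mul]
    _ = a • (1 : Matrix (Fin d) (Fin d) ℝ) + b • Y + c • (Y * Y) := by
        rw [← hone, ← hsq, ← spec_real hY]

lemma exp_conj_diag {Y : Matrix (Fin d) (Fin d) ℝ} (hY : Y.IsHermitian) (v : Fin d → ℝ) :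
    matExpMat ((hY.eigenvectorUnitary : Matrix (Fin d) (Fin d) ℝ) * diagonal v *
        star (hY.eigenvectorUnitary : Matrix (Fin d) (Fin d) ℝ)) =
      (hY.eigenvectorUnitary : Matrix (Fin d) (Fin d) ℝ) * diagonal (fun i => Real.exp (v i)) *
        star (hY.eigenvectorUnitary : Matrix (Fin d) (Fin d) ℝ) := by
  set U := (hY.eigenvectorUnitary : Matrix (Fin d) (Fin d) ℝ)
  have h1 : star U * U = 1 := star_mul_self_eig hY
  have h2 : U * star U = 1 := mul_star_self_eig hY
  let Uu : (Matrix (Fin d) (Fin d) ℝ)ˣ := ⟨U, star U, h2, h1⟩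
  have hinv : (↑Uu⁻¹ : Matrix (Fin d) (Fin d) ℝ) = star U := rfl
  have := Matrix.exp_units_conj Uu (diagonal v)
  rw [hinv] at this
  unfold matExpMat
  rw [show (↑Uu : Matrix (Fin d) (Fin d) ℝ) = U from rfl] at this
  rw [this, Matrix.exp_diagonal]
  congr 2
  rw [Pi.exp_def]
  simp [← Real.exp_eq_exp_ℝ]

lemma conj_diag_psd_sub {Y : Matrix (Fin d) (Fin d) ℝ} (hY : Y.IsHermitian)
    {f g : Fin d → ℝ} (h : ∀ i, f i ≤ g i) :
    ((hY.eigenvectorUnitary : Matrix (Fin d) (Fin d) ℝ) * diagonal g *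
        star (hY.eigenvectorUnitary : Matrix (Fin d) (Fin d) ℝ) -
     (hY.eigenvectorUnitary : Matrix (Fin d) (Fin d) ℝ) * diagonal f *
        star (hY.eigenvectorUnitary : Matrix (Fin d) (Fin d) ℝ)).PosSemidef := by
  set U := (hY.eigenvectorUnitary : Matrix (Fin d) (Fin d) ℝ)
  have e : U * diagonal g * star U - U * diagonal f * star U
      = U * (diagonal g - diagonal f) * star U := by
    rw [Matrix.mul_sub, Matrix.sub_mul]
  rw [e, diagonal_sub, Matrix.star_eq_conjTranspose]
  exact (posSemidef_diagonal_iff.mpr fun i => sub_nonneg.2 (h i)).mul_mul_conjTranspose_same U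

lemma loewner_trans {A B C : Matrix (Fin d) (Fin d) ℝ} (h1 : LoewnerLE A B)
    (h2 : LoewnerLE B C) : LoewnerLE A C := by
  unfold LoewnerLE at *
  rw [← sub_add_sub_cancel C B A]
  exact h2.add h1

lemma herm_smul {A : Matrix (Fin d) (Fin d) ℝ} (hA : A.IsHermitian) (c : ℝ) :
    (c • A).IsHermitian := by
  ext i j
  simp only [Matrix.conjTranspose_apply, Matrix.smul_apply, smul_eq_mul]
  rw [show (star (c * A j i) : ℝ) = c * star (A j i) from rfl, hA.apply i j]

lemma psd_smul {A : Matrix (Fin d) (Fin d) ℝ} (hA : A.PosSemidef) {c : ℝ} (hc : 0 ≤ c) :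
    (c • A).PosSemidef := by
  rw [posSemidef_iff_dotProduct_mulVec]
  constructor
  · exact herm_smul hA.1 c
  · intro x
    rw [Matrix.smul_mulVec, dotProduct_smul]
    exact mul_nonneg hc ((posSemidef_iff_dotProduct_mulVec.mp hA).2 x)

lemma matExpect_posSemidef {Ω : Type*} {m0 : MeasurableSpace Ω} (μ : Measure Ω)
    (A : Ω → Matrix (Fin d) (Fin d) ℝ)
    (hint : ∀ i j, Integrable (fun ω => A ω i j) μ)
    (hpsd : ∀ ω, (A ω).PosSemidef) :
    (matExpect μ A).PosSemidef := by
  rw [posSemidef_iff_dotProduct_mulVec]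
  constructor
  · ext i j
    simp only [Matrix.conjTranspose_apply, matExpect, Matrix.of_apply]
    rw [show (star (∫ ω, A ω j i ∂μ) : ℝ) = ∫ ω, A ω j i ∂μ from rfl]
    exact integral_congr_ae (Filter.Eventually.of_forall fun ω => (hpsd ω).1.apply i j)
  · intro x
    have key : dotProduct (star x) ((matExpect μ A) *ᵥ x)
        = ∫ ω, dotProduct (star x) (A ω *ᵥ x) ∂μ := by
      simp only [dotProduct, Matrix.mulVec, matExpect, Matrix.of_apply]
      rw [integral_finset_sum _ (fun i _ => ?_)]
      · refine Finset.sum_congr rfl fun i _ => ?_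
        rw [integral_const_mul]
        congr 1
        rw [integral_finset_sum _ (fun j _ => (hint i j).mul_const (x j))]
        refine Finset.sum_congr rfl fun j _ => ?_
        rw [integral_mul_const]
      · exact (integrable_finset_sum _ fun j _ => (hint i j).mul_const (x j)).const_mul _
    rw [key]
    exact integral_nonneg fun ω => (posSemidef_iff_dotProduct_mulVec.mp (hpsd ω)).2 x

lemma matExpect_mono {Ω : Type*} {m0 : MeasurableSpace Ω} (μ : Measure Ω)
    (f g : Ω → Matrix (Fin d) (Fin d) ℝ)
    (hf : ∀ i j, Integrable (fun ω => f ω i j) μ)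
    (hg : ∀ i j, Integrable (fun ω => g ω i j) μ)
    (h : ∀ ω, LoewnerLE (f ω) (g ω)) :
    LoewnerLE (matExpect μ f) (matExpect μ g) := by
  have e : matExpect μ g - matExpect μ f = matExpect μ (fun ω => g ω - f ω) := by
    ext i j
    simp only [Matrix.sub_apply, matExpect, Matrix.of_apply]
    rw [integral_sub (hg i j) (hf i j)]
  unfold LoewnerLE
  rw [e]
  exact matExpect_posSemidef μ _
    (fun i j => by
      simpa only [Matrix.sub_apply, Pi.sub_def] using (hg i j).sub (hf i j))
    (fun ω => h ω)

end AuxLemmas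

/-- **One-step self-normalized matrix MGF bound.**
If `X` is a random symmetric matrix with mean `M` and `E[(X - M)²] ⪯ V`, then for every
`γ : ℝ`, `E[ exp(γ(X - M) - (γ²/6)(X - M)²) ] ⪯ exp((γ²/3) V)`. -/
theorem stmt13 {Ω : Type*} {m0 : MeasurableSpace Ω} (μ : Measure Ω) [IsProbabilityMeasure μ]
    {d : ℕ} (X : Ω → Matrix (Fin d) (Fin d) ℝ)
    (hsymm : ∀ ω, (X ω).IsHermitian)
    (hXint : ∀ i j, Integrable (fun ω => X ω i j) μ)
    (M V : Matrix (Fin d) (Fin d) ℝ) (hM : matExpect μ X = M) (hVsymm : V.IsHermitian)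
    (hsqint : ∀ i j, Integrable (fun ω => ((X ω - M) * (X ω - M)) i j) μ)
    (hV : LoewnerLE (matExpect μ (fun ω => (X ω - M) * (X ω - M))) V)
    (γ : ℝ)
    (hexpint : ∀ i j, Integrable (fun ω =>
      matExpMat (γ • (X ω - M) - (γ ^ 2 / 6) • ((X ω - M) * (X ω - M))) i j) μ) :
    LoewnerLE
      (matExpect μ (fun ω =>
        matExpMat (γ • (X ω - M) - (γ ^ 2 / 6) • ((X ω - M) * (X ω - M)))))
      (matExpMat ((γ ^ 2 / 3) • V)) := by
  classical
  set c : ℝ := γ ^ 2 / 3 with hc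
  have hMherm : M.IsHermitian := by
    rw [← hM]
    ext i j
    simp only [Matrix.conjTranspose_apply, matExpect, Matrix.of_apply]
    rw [show (star (∫ ω, X ω j i ∂μ) : ℝ) = ∫ ω, X ω j i ∂μ from rfl]
    exact integral_congr_ae (Filter.Eventually.of_forall fun ω => (hsymm ω).apply i j)
  have hYherm : ∀ ω, (X ω - M).IsHermitian := fun ω => (hsymm ω).sub hMherm
  have hYint : ∀ i j, Integrable (fun ω => (X ω - M) i j) μ := fun i j => by
    simpa only [Matrix.sub_apply, Pi.sub_def] using (hXint i j).sub (integrable_const (M i j))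
  have stepA : ∀ ω, LoewnerLE
      (matExpMat (γ • (X ω - M) - (γ ^ 2 / 6) • ((X ω - M) * (X ω - M))))
      (1 + γ • (X ω - M) + c • ((X ω - M) * (X ω - M))) := by
    intro ω
    set Y := X ω - M with hYdef
    have hY : Y.IsHermitian := hYherm ω
    have eL : γ • Y - (γ ^ 2 / 6) • (Y * Y)
        = (hY.eigenvectorUnitary : Matrix (Fin d) (Fin d) ℝ) *
          diagonal (fun i => 0 + γ * hY.eigenvalues i + (-(γ ^ 2 / 6)) * (hY.eigenvalues i) ^ 2) *
          star (hY.eigenvectorUnitary : Matrix (Fin d) (Fin d) ℝ) := by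
      rw [← rep_quad hY 0 γ (-(γ ^ 2 / 6)), zero_smul, zero_add, neg_smul, ← sub_eq_add_neg]
    have eR : (1 : Matrix (Fin d) (Fin d) ℝ) + γ • Y + c • (Y * Y)
        = (hY.eigenvectorUnitary : Matrix (Fin d) (Fin d) ℝ) *
          diagonal (fun i => 1 + γ * hY.eigenvalues i + c * (hY.eigenvalues i) ^ 2) *
          star (hY.eigenvectorUnitary : Matrix (Fin d) (Fin d) ℝ) := by
      rw [← rep_quad hY 1 γ c, one_smul]
    unfold LoewnerLE
    rw [eL, eR, exp_conj_diag]
    apply conj_diag_psd_sub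
    intro i
    set t := hY.eigenvalues i
    calc Real.exp (0 + γ * t + -(γ ^ 2 / 6) * t ^ 2)
        = Real.exp (γ * t - (γ * t) ^ 2 / 6) := by congr 1; ring
      _ ≤ 1 + γ * t + (γ * t) ^ 2 / 3 := scalar_key (γ * t)
      _ = 1 + γ * t + c * t ^ 2 := by rw [hc]; ring
  have hRint : ∀ i j, Integrable (fun ω =>
      ((1 : Matrix (Fin d) (Fin d) ℝ) + γ • (X ω - M) + c • ((X ω - M) * (X ω - M))) i j) μ := by
    intro i j
    simp only [Matrix.add_apply, Matrix.smul_apply, smul_eq_mul]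
    exact ((integrable_const _).add ((hYint i j).const_mul γ)).add ((hsqint i j).const_mul c)
  have stepB := matExpect_mono μ
    (fun ω => matExpMat (γ • (X ω - M) - (γ ^ 2 / 6) • ((X ω - M) * (X ω - M))))
    (fun ω => (1 : Matrix (Fin d) (Fin d) ℝ) + γ • (X ω - M) + c • ((X ω - M) * (X ω - M)))
    hexpint hRint stepA
  have hW : matExpect μ
      (fun ω => (1 : Matrix (Fin d) (Fin d) ℝ) + γ • (X ω - M) + c • ((X ω - M) * (X ω - M)))
      = 1 + c • matExpect μ (fun ω => (X ω - M) * (X ω - M)) := by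
    ext i j
    have hXij : (∫ ω, X ω i j ∂μ) = M i j := by
      conv_rhs => rw [← hM]
      rfl
    have hYij : ∫ ω, (X ω - M) i j ∂μ = 0 := by
      simp only [Matrix.sub_apply]
      rw [integral_sub (hXint i j) (integrable_const _), hXij, integral_const]
      simp
    have I1 : Integrable (fun ω => (1 : Matrix (Fin d) (Fin d) ℝ) i j + γ * (X ω - M) i j) μ :=
      (integrable_const _).add ((hYint i j).const_mul γ)
    have I2 : Integrable (fun ω => c * ((X ω - M) * (X ω - M)) i j) μ :=
      (hsqint i j).const_mul c
    have I3 : Integrable (fun ω => γ * (X ω - M) i j) μ := (hYint i j).const_mul γ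
    simp only [matExpect, Matrix.of_apply, Matrix.add_apply, Matrix.smul_apply, smul_eq_mul]
    rw [integral_add I1 I2, integral_add (integrable_const _) I3,
      integral_const, integral_const_mul, integral_const_mul, hYij]
    simp [measure_univ]
  rw [hW] at stepB
  have stepD : LoewnerLE (1 + c • matExpect μ (fun ω => (X ω - M) * (X ω - M))) (1 + c • V) := by
    unfold LoewnerLE
    rw [add_sub_add_left_eq_sub, ← smul_sub]
    exact psd_smul hV (by positivity)
  have hcV : (c • V).IsHermitian := herm_smul hVsymm c
  have stepE : LoewnerLE (1 + c • V) (matExpMat (c • V)) := by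
    have e1 : (1 : Matrix (Fin d) (Fin d) ℝ) + c • V
        = (hcV.eigenvectorUnitary : Matrix (Fin d) (Fin d) ℝ) *
          diagonal (fun i => 1 + 1 * hcV.eigenvalues i + 0 * (hcV.eigenvalues i) ^ 2) *
          star (hcV.eigenvectorUnitary : Matrix (Fin d) (Fin d) ℝ) := by
      rw [← rep_quad hcV 1 1 0, one_smul, one_smul, zero_smul, add_zero]
    have e2 : matExpMat (c • V)
        = (hcV.eigenvectorUnitary : Matrix (Fin d) (Fin d) ℝ) *
          diagonal (fun i => Real.exp (hcV.eigenvalues i)) *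
          star (hcV.eigenvectorUnitary : Matrix (Fin d) (Fin d) ℝ) := by
      conv_lhs => rw [spec_real hcV]
      exact exp_conj_diag hcV _
    unfold LoewnerLE
    rw [e1, e2]
    apply conj_diag_psd_sub
    intro i
    have h := Real.add_one_le_exp (hcV.eigenvalues i)
    nlinarith [h]
  exact loewner_trans stepB (loewner_trans stepD stepE)


end
end

section
/- Let {Yₙ}_{n≥0} be a matrix submartingale adapted to a filtration {Fₙ} that is almost surely positive semidefinite at every time n, let N ∈ ℕ, and let A be a d×d symmetric positive definite matrix. Writing E for the event { ∃ n ≤ N : Yₙ ⋠ A }, we have P(E) ≤ tr( E[ Y_N · 1_E ] · A⁻¹ ) ≤ tr( E[Y_N] · A⁻¹ ). -/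
open MeasureTheory ProbabilityTheory Matrix Filter

noncomputable section

section DoobHelpers

variable {d : ℕ}

open scoped MatrixOrder

lemma exists_conjTranspose_mul_self_of_psd {M : Matrix (Fin d) (Fin d) ℝ} (hM : M.PosSemidef) :
    ∃ C : Matrix (Fin d) (Fin d) ℝ, M = Cᴴ * C :=
  ⟨CFC.sqrt M, by rw [(CFC.sqrt_nonneg M).posSemidef.1.eq, CFC.sqrt_mul_sqrt_self M hM.nonneg]⟩

lemma psd_diag_nonneg {M : Matrix (Fin d) (Fin d) ℝ} (hM : M.PosSemidef) (i : Fin d) :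
    0 ≤ M i i := by
  have h := hM.dotProduct_mulVec_nonneg (Pi.single i 1)
  simpa [dotProduct, Matrix.mulVec, Pi.single_apply, mul_ite, ite_mul,
    Finset.sum_ite_eq, Finset.sum_ite_eq', star_trivial] using h

lemma trace_psd_nonneg {M : Matrix (Fin d) (Fin d) ℝ} (hM : M.PosSemidef) :
    0 ≤ M.trace := by
  rw [Matrix.trace]
  exact Finset.sum_nonneg fun i _ => psd_diag_nonneg hM i

lemma trace_mul_psd_nonneg {M B : Matrix (Fin d) (Fin d) ℝ}
    (hM : M.PosSemidef) (hB : B.PosSemidef) : 0 ≤ (M * B).trace := by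
  obtain ⟨C, rfl⟩ := exists_conjTranspose_mul_self_of_psd hM
  rw [← Matrix.trace_mul_cycle C B Cᴴ]
  exact trace_psd_nonneg (hB.mul_mul_conjTranspose_same C)

lemma quadform_eq_sum (M : Matrix (Fin d) (Fin d) ℝ) (x : Fin d → ℝ) :
    x ⬝ᵥ M *ᵥ x = ∑ i, ∑ j, x i * M i j * x j := by
  simp [dotProduct, Matrix.mulVec, Finset.mul_sum, mul_assoc, mul_comm, mul_left_comm]

lemma isHermitian_iff_forall {M : Matrix (Fin d) (Fin d) ℝ} :
    M.IsHermitian ↔ ∀ i j, M j i = M i j := by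
  constructor
  · intro h i j
    conv_rhs => rw [← h.eq]
    simp [Matrix.conjTranspose_apply]
  · intro h
    exact Matrix.ext fun i j => by simp [Matrix.conjTranspose_apply, h i j]

lemma posSemidef_iff_forall {M : Matrix (Fin d) (Fin d) ℝ} :
    M.PosSemidef ↔ (∀ i j, M j i = M i j) ∧
      ∀ x : Fin d → ℝ, 0 ≤ ∑ i, ∑ j, x i * M i j * x j := by
  rw [Matrix.posSemidef_iff_dotProduct_mulVec]
  rw [isHermitian_iff_forall]
  refine and_congr Iff.rfl (forall_congr' fun x => ?_)
  rw [show star x = x from rfl, quadform_eq_sum]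

lemma exists_quadform_neg {M : Matrix (Fin d) (Fin d) ℝ} (hH : M.IsHermitian)
    (h : ¬ M.PosSemidef) : ∃ x : Fin d → ℝ, x ⬝ᵥ M *ᵥ x < 0 := by
  by_contra hc
  push_neg at hc
  exact h (Matrix.PosSemidef.of_dotProduct_mulVec_nonneg hH fun x => hc x)

lemma quadform_le_dot_mul_trace {C : Matrix (Fin d) (Fin d) ℝ} (hC : C.PosSemidef)
    (u : Fin d → ℝ) : u ⬝ᵥ C *ᵥ u ≤ (u ⬝ᵥ u) * C.trace := by
  obtain ⟨D, rfl⟩ := exists_conjTranspose_mul_self_of_psd hC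
  have hswap : ∀ F : Fin d → Fin d → Fin d → ℝ,
      ∑ i, ∑ k, ∑ j, F i k j = ∑ j, ∑ i, ∑ k, F i k j := by
    intro F
    have h1 : ∀ i : Fin d, ∑ k, ∑ j, F i k j = ∑ j, ∑ k, F i k j :=
      fun i => Finset.sum_comm
    simp_rw [h1]
    exact Finset.sum_comm
  have hlhs : u ⬝ᵥ (Dᴴ * D) *ᵥ u = ∑ j, (∑ i, D j i * u i) ^ 2 := by
    rw [quadform_eq_sum]
    simp only [Matrix.mul_apply, Matrix.conjTranspose_apply, star_trivial]
    calc ∑ i, ∑ k, u i * (∑ j, D j i * D j k) * u k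
        = ∑ i, ∑ k, ∑ j, (D j i * u i) * (D j k * u k) := by
          refine Finset.sum_congr rfl fun i _ => Finset.sum_congr rfl fun k _ => ?_
          rw [Finset.mul_sum, Finset.sum_mul]
          exact Finset.sum_congr rfl fun j _ => by ring
      _ = ∑ j, ∑ i, ∑ k, (D j i * u i) * (D j k * u k) := hswap _
      _ = ∑ j, (∑ i, D j i * u i) ^ 2 := by
          refine Finset.sum_congr rfl fun j _ => ?_
          rw [pow_two, Finset.sum_mul_sum]
  have htr : (Dᴴ * D).trace = ∑ j, ∑ k, D j k ^ 2 := by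
    simp only [Matrix.trace, Matrix.diag, Matrix.mul_apply, Matrix.conjTranspose_apply,
      star_trivial]
    rw [Finset.sum_comm]
    exact Finset.sum_congr rfl fun j _ => Finset.sum_congr rfl fun k _ => (pow_two _).symm
  rw [hlhs, htr]
  have hcs : ∀ j : Fin d, (∑ i, D j i * u i) ^ 2 ≤ (∑ i, D j i ^ 2) * (∑ i, u i ^ 2) :=
    fun j => Finset.sum_mul_sq_le_sq_mul_sq Finset.univ _ _
  have huu : u ⬝ᵥ u = ∑ i, u i ^ 2 := by
    simp [dotProduct, pow_two]
  calc ∑ j, (∑ i, D j i * u i) ^ 2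
      ≤ ∑ j, (∑ i, D j i ^ 2) * (∑ i, u i ^ 2) := Finset.sum_le_sum fun j _ => hcs j
    _ = (u ⬝ᵥ u) * ∑ j, ∑ k, D j k ^ 2 := by
        rw [← Finset.sum_mul, huu, mul_comm]

lemma one_le_trace_mul_inv {M A : Matrix (Fin d) (Fin d) ℝ}
    (hM : M.PosSemidef) (hA : A.PosDef) (h : ¬ (A - M).PosSemidef) :
    1 ≤ (M * A⁻¹).trace := by
  obtain ⟨x, hx⟩ := exists_quadform_neg (hA.isHermitian.sub hM.isHermitian) h
  have hx' : x ⬝ᵥ A *ᵥ x < x ⬝ᵥ M *ᵥ x := by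
    have : x ⬝ᵥ (A - M) *ᵥ x = x ⬝ᵥ A *ᵥ x - x ⬝ᵥ M *ᵥ x := by
      rw [Matrix.sub_mulVec, dotProduct_sub]
    linarith [hx, this ▸ hx]
  have hxne : x ≠ 0 := by
    rintro rfl
    simp at hx
  have hAx : 0 < x ⬝ᵥ A *ᵥ x := hA.dotProduct_mulVec_pos hxne
  -- square root of A
  set S := CFC.sqrt A with hSdef
  have hS : S * S = A := CFC.sqrt_mul_sqrt_self A hA.posSemidef.nonneg
  have hSH : S.IsHermitian := (CFC.sqrt_nonneg A).posSemidef.1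
  have hdet : IsUnit S.det := by
    have hdA : A.det ≠ 0 := hA.det_pos.ne'
    rw [← hS, Matrix.det_mul] at hdA
    exact isUnit_iff_ne_zero.mpr fun h0 => hdA (by rw [h0, mul_zero])
  have hSi : S * S⁻¹ = 1 := Matrix.mul_nonsing_inv S hdet
  have hiS : S⁻¹ * S = 1 := Matrix.nonsing_inv_mul S hdet
  have hAinv : A⁻¹ = S⁻¹ * S⁻¹ := by rw [← hS, Matrix.mul_inv_rev]
  have hSiH : (S⁻¹)ᴴ = S⁻¹ := by rw [Matrix.conjTranspose_nonsing_inv, hSH.eq]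
  set C := S⁻¹ * M * S⁻¹ with hCdef
  have hCpsd : C.PosSemidef := by
    rw [hCdef]
    have := hM.mul_mul_conjTranspose_same S⁻¹
    rwa [hSiH] at this
  have htr : (M * A⁻¹).trace = C.trace := by
    rw [hAinv, Matrix.trace_mul_comm, hCdef, Matrix.trace_mul_cycle S⁻¹ M S⁻¹]
  -- transfer quadratic form along S
  have hdotS : ∀ y z : Fin d → ℝ, (S *ᵥ y) ⬝ᵥ z = y ⬝ᵥ (S *ᵥ z) := by
    intro y z
    have hsymm : Sᵀ = S := by
      ext i j
      have := congrFun (congrFun hSH.eq i) j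
      simpa [Matrix.conjTranspose_apply] using this
    rw [dotProduct_comm, Matrix.dotProduct_mulVec, ← Matrix.mulVec_transpose, hsymm,
      dotProduct_comm]
  have hCS : S * C * S = M := by
    rw [hCdef]
    calc S * (S⁻¹ * M * S⁻¹) * S
        = S * (S⁻¹ * (M * (S⁻¹ * S))) := by simp only [Matrix.mul_assoc]
      _ = M := by rw [hiS, Matrix.mul_one, ← Matrix.mul_assoc, hSi, Matrix.one_mul]
  set u := S *ᵥ x with hu
  have hq : u ⬝ᵥ C *ᵥ u = x ⬝ᵥ M *ᵥ x := by
    rw [hu, hdotS, Matrix.mulVec_mulVec, Matrix.mulVec_mulVec, ← hCS]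
  have hud : u ⬝ᵥ u = x ⬝ᵥ A *ᵥ x := by
    rw [hu, hdotS, Matrix.mulVec_mulVec, hS]
  have hQ := quadform_le_dot_mul_trace hCpsd u
  rw [hq, hud] at hQ
  rw [htr]
  by_contra hlt
  push_neg at hlt
  nlinarith [hQ, hx', hAx, hlt]

/-- The positive semidefiniteness condition is measurable (entrywise). -/
lemma measurableSet_psd {Ω : Type*} {m : MeasurableSpace Ω}
    (f : Ω → Matrix (Fin d) (Fin d) ℝ) (hf : ∀ i j, Measurable[m] fun ω => f ω i j) :
    MeasurableSet[m] {ω | (f ω).PosSemidef} := by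
  classical
  set P : Set (Fin d → Fin d → ℝ) :=
    {g | (∀ i j, g j i = g i j) ∧ ∀ x : Fin d → ℝ, 0 ≤ ∑ i, ∑ j, x i * g i j * x j} with hP
  have hclosed : IsClosed P := by
    have hPeq : P = (⋂ i, ⋂ j, {g : Fin d → Fin d → ℝ | g j i = g i j}) ∩
        ⋂ x : Fin d → ℝ, {g : Fin d → Fin d → ℝ | 0 ≤ ∑ i, ∑ j, x i * g i j * x j} := by
      ext g
      simp [hP, Set.mem_iInter, Set.mem_setOf_eq]
    rw [hPeq]
    refine IsClosed.inter ?_ ?_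
    · refine isClosed_iInter fun i => isClosed_iInter fun j => isClosed_eq ?_ ?_
      · exact (continuous_apply i).comp (continuous_apply j)
      · exact (continuous_apply j).comp (continuous_apply i)
    · refine isClosed_iInter fun x => isClosed_le continuous_const ?_
      refine continuous_finset_sum _ fun i _ => continuous_finset_sum _ fun j _ => ?_
      have h1 : Continuous fun g : Fin d → Fin d → ℝ => g i j :=
        (continuous_apply j).comp (continuous_apply i)
      exact (continuous_const.mul h1).mul continuous_const
  have hmeas : Measurable[m] fun ω => (fun i j => f ω i j : Fin d → Fin d → ℝ) :=
    measurable_pi_lambda _ fun i => measurable_pi_lambda _ fun j => hf i j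
  have : {ω | (f ω).PosSemidef} = (fun ω => (fun i j => f ω i j : Fin d → Fin d → ℝ)) ⁻¹' P := by
    ext ω
    simp only [Set.mem_setOf_eq, Set.mem_preimage, hP]
    rw [posSemidef_iff_forall]
  rw [this]
  exact hmeas hclosed.measurableSet

section IntegralHelpers

variable {Ω : Type*} {mΩ : MeasurableSpace Ω}

lemma quadform_matIntegral (ν : Measure Ω) (f : Ω → Matrix (Fin d) (Fin d) ℝ)
    (hf : ∀ i j, Integrable (fun ω => f ω i j) ν) (x : Fin d → ℝ) :
    x ⬝ᵥ (Matrix.of fun i j => ∫ ω, f ω i j ∂ν) *ᵥ x = ∫ ω, x ⬝ᵥ (f ω) *ᵥ x ∂ν := by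
  have hint : ∀ i ∈ Finset.univ, ∀ j ∈ (Finset.univ : Finset (Fin d)),
      Integrable (fun ω => x i * f ω i j * x j) ν := fun i _ j _ =>
    ((hf i j).const_mul (x i)).mul_const (x j)
  calc x ⬝ᵥ (Matrix.of fun i j => ∫ ω, f ω i j ∂ν) *ᵥ x
      = ∑ i, ∑ j, x i * (∫ ω, f ω i j ∂ν) * x j := quadform_eq_sum _ x
    _ = ∑ i, ∑ j, ∫ ω, x i * f ω i j * x j ∂ν := by
        refine Finset.sum_congr rfl fun i _ => Finset.sum_congr rfl fun j _ => ?_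
        rw [← MeasureTheory.integral_const_mul, ← MeasureTheory.integral_mul_const]
    _ = ∫ ω, ∑ i, ∑ j, x i * f ω i j * x j ∂ν := by
        rw [MeasureTheory.integral_finset_sum _ (fun i _ =>
          MeasureTheory.integrable_finset_sum _ (hint i (Finset.mem_univ i)))]
        exact Finset.sum_congr rfl fun i _ =>
          (MeasureTheory.integral_finset_sum _ (hint i (Finset.mem_univ i))).symm
    _ = ∫ ω, x ⬝ᵥ (f ω) *ᵥ x ∂ν := by
        refine integral_congr_ae (Eventually.of_forall fun ω => ?_)
        exact (quadform_eq_sum _ x).symm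

lemma matIntegral_posSemidef (ν : Measure Ω) (f : Ω → Matrix (Fin d) (Fin d) ℝ)
    (hf : ∀ i j, Integrable (fun ω => f ω i j) ν)
    (h : ∀ᵐ ω ∂ν, (f ω).PosSemidef) :
    (Matrix.of fun i j => ∫ ω, f ω i j ∂ν).PosSemidef := by
  rw [posSemidef_iff_forall]
  constructor
  · intro i j
    simp only [Matrix.of_apply]
    refine integral_congr_ae (h.mono fun ω hω => ?_)
    exact (posSemidef_iff_forall.mp hω).1 i j
  · intro x
    have hqi := quadform_matIntegral ν f hf x
    rw [quadform_eq_sum] at hqi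
    rw [hqi]
    refine integral_nonneg_of_ae (h.mono fun ω hω => ?_)
    exact hω.dotProduct_mulVec_nonneg x

lemma trace_matIntegral_mul (ν : Measure Ω) (f : Ω → Matrix (Fin d) (Fin d) ℝ)
    (hf : ∀ i j, Integrable (fun ω => f ω i j) ν) (C : Matrix (Fin d) (Fin d) ℝ) :
    ((Matrix.of fun i j => ∫ ω, f ω i j ∂ν) * C).trace = ∫ ω, ((f ω) * C).trace ∂ν := by
  have hint : ∀ i ∈ Finset.univ, ∀ j ∈ (Finset.univ : Finset (Fin d)),
      Integrable (fun ω => f ω i j * C j i) ν := fun i _ j _ => (hf i j).mul_const (C j i)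
  calc ((Matrix.of fun i j => ∫ ω, f ω i j ∂ν) * C).trace
      = ∑ i, ∑ j, (∫ ω, f ω i j ∂ν) * C j i := by
        simp [Matrix.trace, Matrix.diag, Matrix.mul_apply]
    _ = ∑ i, ∑ j, ∫ ω, f ω i j * C j i ∂ν := by
        refine Finset.sum_congr rfl fun i _ => Finset.sum_congr rfl fun j _ => ?_
        rw [MeasureTheory.integral_mul_const]
    _ = ∫ ω, ∑ i, ∑ j, f ω i j * C j i ∂ν := by
        rw [MeasureTheory.integral_finset_sum _ (fun i _ =>
          MeasureTheory.integrable_finset_sum _ (hint i (Finset.mem_univ i)))]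
        exact Finset.sum_congr rfl fun i _ =>
          (MeasureTheory.integral_finset_sum _ (hint i (Finset.mem_univ i))).symm
    _ = ∫ ω, ((f ω) * C).trace ∂ν := by
        refine integral_congr_ae (Eventually.of_forall fun ω => ?_)
        simp [Matrix.trace, Matrix.diag, Matrix.mul_apply]

end IntegralHelpers

section Submartingale

variable {Ω : Type*} {m0 : MeasurableSpace Ω}

/-- One-step set-integral monotonicity for matrix submartingales. -/
lemma setIntegral_step (μ : Measure Ω) [IsProbabilityMeasure μ] (ℱ : Filtration ℕ m0)
    (Y : ℕ → Ω → Matrix (Fin d) (Fin d) ℝ) (hY : IsMatrixSubmartingale ℱ μ Y)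
    (k : ℕ) {S : Set Ω} (hS : MeasurableSet[ℱ k] S) :
    ((Matrix.of fun i j => ∫ ω in S, Y (k + 1) ω i j ∂μ)
      - (Matrix.of fun i j => ∫ ω in S, Y k ω i j ∂μ)).PosSemidef := by
  obtain ⟨hherm, hadp, hint, hsub⟩ := hY
  have hcond : ∀ i j, ∫ ω in S, Y (k+1) ω i j ∂μ
      = ∫ ω in S, (μ[fun ω' => Y (k+1) ω' i j | ℱ k]) ω ∂μ := fun i j =>
    (setIntegral_condExp (ℱ.le k) (hint (k+1) i j) hS).symm
  set g : Ω → Matrix (Fin d) (Fin d) ℝ :=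
    fun ω => matCondExp μ (ℱ k) (Y (k+1)) ω - Y k ω with hg
  have hgint : ∀ i j, Integrable (fun ω => g ω i j) (μ.restrict S) := by
    intro i j
    exact (integrable_condExp.sub (hint k i j)).restrict
  have heq : ((Matrix.of fun i j => ∫ ω in S, Y (k + 1) ω i j ∂μ)
      - (Matrix.of fun i j => ∫ ω in S, Y k ω i j ∂μ))
      = Matrix.of fun i j => ∫ ω in S, g ω i j ∂μ := by
    ext i j
    simp only [Matrix.sub_apply, Matrix.of_apply]
    rw [hcond i j, ← integral_sub integrable_condExp.restrict (hint k i j).restrict]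
    rfl
  rw [heq]
  refine matIntegral_posSemidef (μ.restrict S) g hgint ?_
  refine ae_restrict_of_ae ((hsub k).mono fun ω hω => ?_)
  exact hω

/-- Set-integral monotonicity for matrix submartingales across multiple steps. -/
lemma setIntegral_loewner_mono (μ : Measure Ω) [IsProbabilityMeasure μ] (ℱ : Filtration ℕ m0)
    (Y : ℕ → Ω → Matrix (Fin d) (Fin d) ℝ) (hY : IsMatrixSubmartingale ℱ μ Y)
    {m n : ℕ} (hmn : m ≤ n) {S : Set Ω} (hS : MeasurableSet[ℱ m] S) :
    ((Matrix.of fun i j => ∫ ω in S, Y n ω i j ∂μ)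
      - (Matrix.of fun i j => ∫ ω in S, Y m ω i j ∂μ)).PosSemidef := by
  induction n, hmn using Nat.le_induction with
  | base =>
      rw [sub_self]
      exact Matrix.PosSemidef.zero
  | succ n hmn ih =>
      have h2 := setIntegral_step μ ℱ Y hY n (ℱ.mono hmn S hS)
      have h3 := h2.add ih
      rw [sub_add_sub_cancel] at h3
      exact h3

end Submartingale

end DoobHelpers

/-- **Matrix Doob's inequality.**
For an a.s. positive semidefinite matrix submartingale `Y`, `N ∈ ℕ`, `A ≻ 0`, and the event
`Ev = {∃ n ≤ N, Yₙ ⋠ A}`: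
`P(Ev) ≤ tr( E[Y_N 1_Ev] A⁻¹ ) ≤ tr( E[Y_N] A⁻¹ )`. -/
theorem stmt14 {Ω : Type*} {m0 : MeasurableSpace Ω} (μ : Measure Ω) [IsProbabilityMeasure μ]
    {d : ℕ} (ℱ : Filtration ℕ m0)
    (Y : ℕ → Ω → Matrix (Fin d) (Fin d) ℝ)
    (hY : IsMatrixSubmartingale ℱ μ Y)
    (hpos : ∀ n, ∀ᵐ ω ∂μ, (Y n ω).PosSemidef)
    (N : ℕ) (A : Matrix (Fin d) (Fin d) ℝ) (hA : A.PosDef) :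
    ∀ Ev : Set Ω, Ev = {ω | ∃ n ≤ N, ¬ LoewnerLE (Y n ω) A} →
      ∀ Z : Matrix (Fin d) (Fin d) ℝ,
        Z = Matrix.of (fun i j => ∫ ω, Ev.indicator (fun ω' => Y N ω' i j) ω ∂μ) →
        μ Ev ≤ ENNReal.ofReal ((Z * A⁻¹).trace) ∧
          (Z * A⁻¹).trace ≤ (matExpect μ (Y N) * A⁻¹).trace := by
  classical
  intro Ev hEv Z hZ
  have hadp := hY.2.1
  have hint := hY.2.2.1
  set L : ℕ → Set Ω := fun n => {ω | LoewnerLE (Y n ω) A} with hL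
  have hLm : ∀ n, MeasurableSet[ℱ n] (L n) := by
    intro n
    have : L n = {ω | ((fun ω => A - Y n ω) ω).PosSemidef} := rfl
    rw [this]
    exact measurableSet_psd _ fun i j => measurable_const.sub (hadp n i j).measurable
  set E : ℕ → Set Ω := fun n => (L n)ᶜ ∩ ⋂ k ∈ Set.Iio n, L k with hE
  have hEm : ∀ n, MeasurableSet[ℱ n] (E n) := by
    intro n
    refine ((hLm n).compl).inter ?_
    refine MeasurableSet.biInter (Set.to_countable _) fun k hk => ?_
    exact ℱ.mono (le_of_lt hk) _ (hLm k)
  have hEm0 : ∀ n, MeasurableSet (E n) := fun n => ℱ.le n _ (hEm n)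
  have hdisj' : ∀ a b : ℕ, a < b → Disjoint (E a) (E b) := by
    intro a b hab
    rw [Set.disjoint_left]
    rintro ω ⟨hωa, -⟩ ⟨-, hωb⟩
    exact hωa (Set.mem_iInter₂.mp hωb a hab)
  have hdisj : Set.PairwiseDisjoint ↑(Finset.range (N+1)) E := by
    intro a _ b _ hab
    rcases lt_or_gt_of_ne hab with h | h
    · exact hdisj' a b h
    · exact (hdisj' b a h).symm
  have hEvU : Ev = ⋃ n ∈ Finset.range (N+1), E n := by
    rw [hEv]
    ext ω
    simp only [Set.mem_setOf_eq, Set.mem_iUnion, Finset.mem_range]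
    constructor
    · rintro ⟨n, hn, hnL⟩
      have hex : ∃ k, ¬ LoewnerLE (Y k ω) A := ⟨n, hnL⟩
      refine ⟨Nat.find hex, lt_of_le_of_lt (Nat.find_min' hex hnL) (Nat.lt_succ_of_le hn),
        ?_, ?_⟩
      · exact Nat.find_spec hex
      · exact Set.mem_iInter₂.mpr fun k hk => not_not.mp (Nat.find_min hex hk)
    · rintro ⟨n, hn, hnE⟩
      exact ⟨n, Nat.lt_succ_iff.mp hn, hnE.1⟩
  have hEvM : MeasurableSet Ev := by
    rw [hEvU]
    exact (Finset.range (N+1)).measurableSet_biUnion fun n _ => hEm0 n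
  have hAinv : (A⁻¹).PosSemidef := hA.inv.posSemidef
  -- step 1 : measure of E n is at most the trace integral at time n
  have step1 : ∀ n, n ≤ N → (μ (E n)).toReal
      ≤ (((Matrix.of fun i j => ∫ ω in E n, Y n ω i j ∂μ) : Matrix (Fin d) (Fin d) ℝ)
          * A⁻¹).trace := by
    intro n hn
    have htr := trace_matIntegral_mul (μ.restrict (E n)) (Y n)
      (fun i j => (hint n i j).restrict) A⁻¹
    rw [htr]
    have hone : (μ (E n)).toReal = ∫ _ω in E n, (1:ℝ) ∂μ := by
      simp [Measure.real]
    rw [hone]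
    have htint : Integrable (fun ω => ((Y n ω) * A⁻¹).trace) (μ.restrict (E n)) := by
      have heq : (fun ω => ((Y n ω) * A⁻¹).trace)
          = fun ω => ∑ i, ∑ j, Y n ω i j * A⁻¹ j i := by
        funext ω
        simp [Matrix.trace, Matrix.diag, Matrix.mul_apply]
      rw [heq]
      exact integrable_finset_sum _ fun i _ => integrable_finset_sum _ fun j _ =>
        ((hint n i j).restrict).mul_const _
    refine integral_mono_ae (integrable_const 1) htint ?_
    have hb : ∀ᵐ ω ∂μ, ω ∈ E n → 1 ≤ ((Y n ω) * A⁻¹).trace := by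
      refine (hpos n).mono fun ω hω hmem => ?_
      exact one_le_trace_mul_inv hω hA hmem.1
    exact (ae_restrict_iff' (hEm0 n)).mpr hb
  -- step 2 : submartingale property moves time n to time N
  have step2 : ∀ n, n ≤ N →
      (((Matrix.of fun i j => ∫ ω in E n, Y n ω i j ∂μ) : Matrix (Fin d) (Fin d) ℝ)
          * A⁻¹).trace
      ≤ (((Matrix.of fun i j => ∫ ω in E n, Y N ω i j ∂μ) : Matrix (Fin d) (Fin d) ℝ)
          * A⁻¹).trace := by
    intro n hn
    have hpsd := setIntegral_loewner_mono μ ℱ Y hY hn (hEm n)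
    have h0 := trace_mul_psd_nonneg hpsd hAinv
    rw [Matrix.sub_mul, Matrix.trace_sub] at h0
    linarith
  -- Z as a sum over the disjoint pieces
  have hZ' : Z = ∑ n ∈ Finset.range (N+1),
      (Matrix.of fun i j => ∫ ω in E n, Y N ω i j ∂μ : Matrix (Fin d) (Fin d) ℝ) := by
    rw [hZ]
    ext i j
    rw [Matrix.of_apply, integral_indicator hEvM, hEvU,
      integral_biUnion_finset (Finset.range (N+1)) (fun n _ => hEm0 n) hdisj
        (fun n _ => (hint N i j).integrableOn)]
    rw [Matrix.sum_apply]
    rfl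
  have hsum_tr : (Z * A⁻¹).trace = ∑ n ∈ Finset.range (N+1),
      (((Matrix.of fun i j => ∫ ω in E n, Y N ω i j ∂μ) : Matrix (Fin d) (Fin d) ℝ)
        * A⁻¹).trace := by
    rw [hZ', Finset.sum_mul, Matrix.trace_sum]
  have hmeasEv : μ Ev = ∑ n ∈ Finset.range (N+1), μ (E n) := by
    rw [hEvU]
    exact measure_biUnion_finset hdisj fun n _ => hEm0 n
  have h1 : (μ Ev).toReal ≤ (Z * A⁻¹).trace := by
    rw [hmeasEv, hsum_tr, ENNReal.toReal_sum (fun n _ => measure_ne_top μ (E n))]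
    refine Finset.sum_le_sum fun n hn => ?_
    have hn' : n ≤ N := Nat.lt_succ_iff.mp (Finset.mem_range.mp hn)
    exact le_trans (step1 n hn') (step2 n hn')
  constructor
  · rw [← ENNReal.ofReal_toReal (measure_ne_top μ Ev)]
    exact ENNReal.ofReal_le_ofReal h1
  · have hcompl : matExpect μ (Y N) - Z
        = Matrix.of fun i j => ∫ ω in Evᶜ, Y N ω i j ∂μ := by
      ext i j
      simp only [Matrix.sub_apply, Matrix.of_apply, matExpect]
      rw [hZ, Matrix.of_apply, integral_indicator hEvM]
      have := integral_add_compl hEvM (hint N i j)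
      linarith
    have hpsdc : (matExpect μ (Y N) - Z).PosSemidef := by
      rw [hcompl]
      exact matIntegral_posSemidef (μ.restrict Evᶜ) (Y N)
        (fun i j => (hint N i j).restrict) (ae_restrict_of_ae (hpos N))
    have h0 := trace_mul_psd_nonneg hpsdc hAinv
    rw [Matrix.sub_mul, Matrix.trace_sub] at h0
    linarith

end
end

section
/- Let {Gₙ}_{n≥0} be a backward filtration (G₀ ⊇ G₁ ⊇ G₂ ⊇ …) and let {Yₙ}_{n≥0} be a backward matrix submartingale adapted to it that is almost surely positive semidefinite at every time n. Then for any d×d symmetric positive definite matrix A, P( ∃ n ≥ 0 : Yₙ ⋠ A ) ≤ tr( E[Y₀] · A⁻¹ ). -/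
open MeasureTheory ProbabilityTheory Matrix Filter

noncomputable section

section auxmat
variable {d : ℕ}


lemma myTrace_nonneg {S : Matrix (Fin d) (Fin d) ℝ} (hS : S.PosSemidef) : 0 ≤ S.trace := by
  refine Finset.sum_nonneg fun i _ => ?_
  have := hS.dotProduct_mulVec_nonneg (Pi.single i 1)
  simpa [star_trivial, dotProduct, mulVec, Pi.single_apply, Finset.sum_ite_eq, mul_comm] using this

lemma spectral_pack {S : Matrix (Fin d) (Fin d) ℝ} (hS : S.IsHermitian) :
    ∃ U : Matrix (Fin d) (Fin d) ℝ, star U * U = 1 ∧ U * star U = 1 ∧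
      S = U * Matrix.diagonal hS.eigenvalues * star U := by
  refine ⟨hS.eigenvectorUnitary, Matrix.UnitaryGroup.star_mul_self _,
    Matrix.mem_unitaryGroup_iff.mp hS.eigenvectorUnitary.2, ?_⟩
  have h := hS.spectral_theorem
  rwa [RCLike.ofReal_real_eq_id, Function.id_comp] at h

lemma myTrace_eq_sum_eig {S : Matrix (Fin d) (Fin d) ℝ} (hS : S.IsHermitian) :
    S.trace = ∑ i, hS.eigenvalues i := by
  obtain ⟨U, hU1, _, hspec⟩ := spectral_pack hS
  have h := congrArg Matrix.trace hspec
  rw [h, Matrix.trace_mul_cycle, hU1, Matrix.one_mul,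
    Matrix.trace_diagonal]

lemma smul_one_sub_psd {S : Matrix (Fin d) (Fin d) ℝ} (hS : S.PosSemidef) :
    (S.trace • (1 : Matrix (Fin d) (Fin d) ℝ) - S).PosSemidef := by
  obtain ⟨U, hU1, hU2, hspec⟩ := spectral_pack hS.1
  have htr := myTrace_eq_sum_eig hS.1
  have hdiag : Matrix.diagonal (fun i : Fin d => S.trace - hS.1.eigenvalues i) =
      S.trace • (1 : Matrix (Fin d) (Fin d) ℝ) - Matrix.diagonal hS.1.eigenvalues := by
    rw [Matrix.smul_one_eq_diagonal, Matrix.diagonal_sub]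
  have key : S.trace • (1 : Matrix (Fin d) (Fin d) ℝ) - S =
      U * Matrix.diagonal (fun i => S.trace - hS.1.eigenvalues i) * star U := by
    rw [hdiag, Matrix.mul_sub, Matrix.sub_mul, Matrix.mul_smul, Matrix.smul_mul,
      Matrix.mul_one, hU2, ← hspec]
  rw [key, Matrix.star_eq_conjTranspose]
  refine Matrix.PosSemidef.mul_mul_conjTranspose_same ?_ _
  refine Matrix.posSemidef_diagonal_iff.mpr fun i => ?_
  rw [sub_nonneg, htr]
  exact Finset.single_le_sum (fun j _ => hS.eigenvalues_nonneg j) (Finset.mem_univ i)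

lemma dot_le_trace {S : Matrix (Fin d) (Fin d) ℝ} (hS : S.PosSemidef) (w : Fin d → ℝ) :
    w ⬝ᵥ S *ᵥ w ≤ S.trace * (w ⬝ᵥ w) := by
  have := (smul_one_sub_psd hS).dotProduct_mulVec_nonneg w
  simp only [star_trivial, Matrix.sub_mulVec, Matrix.smul_mulVec, Matrix.one_mulVec,
    dotProduct_sub, dotProduct_smul, smul_eq_mul] at this
  linarith

lemma trace_mul_psd_nonneg_s15 {P Q : Matrix (Fin d) (Fin d) ℝ} (hP : P.PosSemidef)
    (hQ : Q.PosSemidef) : 0 ≤ (P * Q).trace := by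
  obtain ⟨R, hRH, hRP⟩ : ∃ R : Matrix (Fin d) (Fin d) ℝ, Rᴴ = R ∧ R * R = P :=
    by open scoped MatrixOrder in
      exact ⟨CFC.sqrt P, (CFC.sqrt_nonneg P).posSemidef.1, CFC.sqrt_mul_sqrt_self P hP.nonneg⟩
  rw [← hRP, Matrix.mul_assoc, Matrix.trace_mul_comm]
  have h3 : (R * Q * Rᴴ).PosSemidef := hQ.mul_mul_conjTranspose_same _
  rw [hRH] at h3
  exact myTrace_nonneg h3

lemma conj_dot {M N : Matrix (Fin d) (Fin d) ℝ} (hMt : Mᵀ = M) (v : Fin d → ℝ) :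
    v ⬝ᵥ ((M * N * M) *ᵥ v) = (M *ᵥ v) ⬝ᵥ (N *ᵥ (M *ᵥ v)) := by
  rw [← Matrix.mulVec_mulVec, ← Matrix.mulVec_mulVec,
    Matrix.dotProduct_mulVec v M, ← Matrix.mulVec_transpose, hMt]

lemma key_lemma {Y A : Matrix (Fin d) (Fin d) ℝ} (hY : Y.PosSemidef) (hA : A.PosDef)
    (h : ¬ (A - Y).PosSemidef) : 1 < (Y * A⁻¹).trace := by
  obtain ⟨v, hv⟩ : ∃ v : Fin d → ℝ, v ⬝ᵥ (A - Y) *ᵥ v < 0 := by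
    by_contra hc
    push_neg at hc
    exact h (PosSemidef.of_dotProduct_mulVec_nonneg (hA.1.sub hY.1) fun x => by simpa using hc x)
  have hvAY : v ⬝ᵥ A *ᵥ v < v ⬝ᵥ Y *ᵥ v := by
    simp only [Matrix.sub_mulVec, dotProduct_sub] at hv; linarith
  obtain ⟨B, hBH, hBB, hBpsd⟩ : ∃ B : Matrix (Fin d) (Fin d) ℝ,
      Bᴴ = B ∧ B * B = A ∧ B.PosSemidef :=
    by open scoped MatrixOrder in
      exact ⟨CFC.sqrt A, (CFC.sqrt_nonneg A).posSemidef.1, CFC.sqrt_mul_sqrt_self A hA.posSemidef.nonneg,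
        (CFC.sqrt_nonneg A).posSemidef⟩
  have hBt : Bᵀ = B := by
    rw [← Matrix.conjTranspose_eq_transpose_of_trivial, hBH]
  have hdetB : IsUnit B.det := by
    have hd : B.det * B.det = A.det := by rw [← Matrix.det_mul, hBB]
    have hApos := hA.det_pos
    refine isUnit_iff_ne_zero.mpr fun h0 => ?_
    rw [h0, mul_zero] at hd; rw [← hd] at hApos; exact lt_irrefl _ hApos
  have hBinvH : (B⁻¹)ᴴ = B⁻¹ := by rw [Matrix.conjTranspose_nonsing_inv, hBH]
  have hSpsd : (B⁻¹ * Y * B⁻¹).PosSemidef := by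
    have := hY.mul_mul_conjTranspose_same B⁻¹
    rwa [hBinvH] at this
  have htrS : (Y * A⁻¹).trace = (B⁻¹ * Y * B⁻¹).trace := by
    rw [← hBB, Matrix.mul_inv_rev, ← Matrix.mul_assoc, Matrix.trace_mul_comm,
      ← Matrix.mul_assoc]
  have hconj : B * (B⁻¹ * Y * B⁻¹) * B = Y := by
    simp only [← Matrix.mul_assoc]
    rw [Matrix.mul_nonsing_inv _ hdetB, Matrix.one_mul, Matrix.mul_assoc,
      Matrix.nonsing_inv_mul _ hdetB, Matrix.mul_one]
  have hdot1 : (B *ᵥ v) ⬝ᵥ ((B⁻¹ * Y * B⁻¹) *ᵥ (B *ᵥ v)) = v ⬝ᵥ Y *ᵥ v := by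
    rw [← conj_dot hBt, hconj]
  have hdot2 : (B *ᵥ v) ⬝ᵥ (B *ᵥ v) = v ⬝ᵥ A *ᵥ v := by
    have h1 := conj_dot (N := 1) hBt v
    rw [Matrix.mul_one, hBB, Matrix.one_mulVec] at h1
    exact h1.symm
  have hrayleigh := dot_le_trace hSpsd (B *ᵥ v)
  rw [hdot1, hdot2] at hrayleigh
  have hvA : 0 < v ⬝ᵥ A *ᵥ v := by
    rcases eq_or_ne v 0 with rfl | hv0
    · simp at hvAY
    · simpa using hA.dotProduct_mulVec_pos hv0
  rw [htrS]
  by_contra hle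
  push_neg at hle
  have hmul : (B⁻¹ * Y * B⁻¹).trace * (v ⬝ᵥ A *ᵥ v) ≤ 1 * (v ⬝ᵥ A *ᵥ v) :=
    mul_le_mul_of_nonneg_right hle (le_of_lt hvA)
  rw [one_mul] at hmul
  linarith

end auxmat

lemma trace_mul_eq' {d : ℕ} (M N : Matrix (Fin d) (Fin d) ℝ) :
    (M * N).trace = ∑ p : Fin d × Fin d, M p.1 p.2 * N p.2 p.1 := by
  rw [Fintype.sum_prod_type]
  simp [Matrix.trace, Matrix.mul_apply]

/-- **Matrix backward Ville's inequality.**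
Let `{Gₙ}` be a backward filtration and `{Yₙ}` an adapted backward matrix submartingale
(`E(Yₙ | G_{n+1}) ⪰ Y_{n+1}` a.s.) that is a.s. positive semidefinite at every time. Then for
any `A ≻ 0`: `P( ∃ n, Yₙ ⋠ A ) ≤ tr( E[Y₀] A⁻¹ )`. -/
theorem stmt15 {Ω : Type*} {m0 : MeasurableSpace Ω} (μ : Measure Ω) [IsProbabilityMeasure μ]
    {d : ℕ} (G : ℕ → MeasurableSpace Ω)
    (hGle : ∀ n, G n ≤ m0) (hGanti : Antitone G)
    (Y : ℕ → Ω → Matrix (Fin d) (Fin d) ℝ)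
    (hsymm : ∀ n ω, (Y n ω).IsHermitian)
    (hmeas : ∀ n i j, StronglyMeasurable[G n] fun ω => Y n ω i j)
    (hint : ∀ n i j, Integrable (fun ω => Y n ω i j) μ)
    (hpos : ∀ n, ∀ᵐ ω ∂μ, (Y n ω).PosSemidef)
    (hsub : ∀ n, ∀ᵐ ω ∂μ, LoewnerLE (Y (n + 1) ω) (matCondExp μ (G (n + 1)) (Y n) ω))
    (A : Matrix (Fin d) (Fin d) ℝ) (hA : A.PosDef) :
    μ {ω | ∃ n, ¬ LoewnerLE (Y n ω) A} ≤
      ENNReal.ofReal ((matExpect μ (Y 0) * A⁻¹).trace) := by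
  classical
  have hAinvPsd : (A⁻¹).PosSemidef := hA.inv.posSemidef
  set Z : ℕ → Ω → ℝ := fun n ω => (Y n ω * A⁻¹).trace with hZdef
  have hZeq : ∀ n ω, Z n ω = ∑ p : Fin d × Fin d, Y n ω p.1 p.2 * A⁻¹ p.2 p.1 := fun n ω =>
    trace_mul_eq' _ _
  have hZmeasG : ∀ n, StronglyMeasurable[G n] (Z n) := by
    intro n
    have h : Z n = fun ω => ∑ p : Fin d × Fin d, Y n ω p.1 p.2 * A⁻¹ p.2 p.1 := by
      funext ω; exact hZeq n ω
    rw [h]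
    exact Finset.stronglyMeasurable_fun_sum _ fun (p : Fin d × Fin d) _ => (hmeas n p.1 p.2).mul_const _
  have hZmeas : ∀ n m, n ≤ m → Measurable[G n] (Z m) := fun n m hnm =>
    ((hZmeasG m).measurable).mono (hGanti hnm) le_rfl
  have hZmeas0 : ∀ n, Measurable (Z n) := fun n =>
    ((hZmeasG n).measurable).mono (hGle n) le_rfl
  have hZint : ∀ n, Integrable (Z n) μ := by
    intro n
    have h : Z n = fun ω => ∑ p : Fin d × Fin d, Y n ω p.1 p.2 * A⁻¹ p.2 p.1 := by
      funext ω; exact hZeq n ω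
    rw [h]
    exact integrable_finset_sum _ fun p _ => (hint n p.1 p.2).mul_const _
  have hZnn : ∀ n, 0 ≤ᵐ[μ] Z n := fun n =>
    (hpos n).mono fun ω h => trace_mul_psd_nonneg_s15 h hAinvPsd
  -- conditional expectation linearity
  have hce : ∀ n, μ[Z n | G (n + 1)] =ᵐ[μ]
      fun ω => ((matCondExp μ (G (n + 1)) (Y n) ω) * A⁻¹).trace := by
    intro n
    have hZsum : Z n = ∑ p : Fin d × Fin d, fun ω => Y n ω p.1 p.2 * A⁻¹ p.2 p.1 := by
      funext ω
      rw [hZeq n ω, Finset.sum_apply]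
    have h1 : μ[Z n | G (n + 1)] =ᵐ[μ]
        ∑ p : Fin d × Fin d, μ[fun ω => Y n ω p.1 p.2 * A⁻¹ p.2 p.1 | G (n + 1)] := by
      rw [hZsum]
      exact condExp_finset_sum (fun (p : Fin d × Fin d) _ => (hint n p.1 p.2).mul_const _) _
    have h2 : ∀ᵐ ω ∂μ, ∀ p : Fin d × Fin d,
        (μ[fun ω' => Y n ω' p.1 p.2 * A⁻¹ p.2 p.1 | G (n + 1)]) ω
          = A⁻¹ p.2 p.1 * (μ[fun ω' => Y n ω' p.1 p.2 | G (n + 1)]) ω := by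
      rw [ae_all_iff]
      intro p
      have hmul : (fun ω' => Y n ω' p.1 p.2 * A⁻¹ p.2 p.1)
          = (A⁻¹ p.2 p.1) • (fun ω' => Y n ω' p.1 p.2) := by
        funext ω'; simp [smul_eq_mul, mul_comm]
      rw [hmul]
      filter_upwards [condExp_smul (μ := μ) (m := G (n + 1)) (A⁻¹ p.2 p.1)
        (fun ω' => Y n ω' p.1 p.2)] with ω hω
      simpa using hω
    filter_upwards [h1, h2] with ω hω1 hω2
    rw [hω1, Finset.sum_apply, trace_mul_eq']
    refine Finset.sum_congr rfl fun p _ => ?_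
    rw [hω2 p, matCondExp]
    simp [mul_comm]
  -- submartingale step
  have hstep : ∀ n, Z (n + 1) ≤ᵐ[μ] μ[Z n | G (n + 1)] := by
    intro n
    filter_upwards [hsub n, hce n] with ω hω hωce
    have hψ : ((matCondExp μ (G (n + 1)) (Y n) ω - Y (n + 1) ω)).PosSemidef := hω
    have h0 : 0 ≤ ((matCondExp μ (G (n + 1)) (Y n) ω - Y (n + 1) ω) * A⁻¹).trace :=
      trace_mul_psd_nonneg_s15 hψ hAinvPsd
    rw [Matrix.sub_mul, Matrix.trace_sub] at h0
    have : Z (n + 1) ω = (Y (n + 1) ω * A⁻¹).trace := rfl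
    rw [this, hωce]
    linarith
  -- set integral step and chain
  have hsetstep : ∀ n (B : Set Ω), MeasurableSet[G (n + 1)] B →
      ∫ ω in B, Z (n + 1) ω ∂μ ≤ ∫ ω in B, Z n ω ∂μ := by
    intro n B hB
    calc ∫ ω in B, Z (n + 1) ω ∂μ ≤ ∫ ω in B, (μ[Z n | G (n + 1)]) ω ∂μ :=
          setIntegral_mono_ae (hZint (n + 1)).integrableOn
            integrable_condExp.integrableOn (hstep n)
      _ = ∫ ω in B, Z n ω ∂μ := setIntegral_condExp (hGle (n + 1)) (hZint n) hB
  have hchain : ∀ n (B : Set Ω), MeasurableSet[G n] B →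
      ∫ ω in B, Z n ω ∂μ ≤ ∫ ω in B, Z 0 ω ∂μ := by
    intro n
    induction n with
    | zero => exact fun B _ => le_rfl
    | succ n ih =>
      intro B hB
      exact (hsetstep n B hB).trans (ih B (hGanti (Nat.le_succ n) _ hB))
  -- the stopping sets
  set Bset : ℕ → ℕ → Set Ω := fun n N =>
    {ω | 1 < Z n ω} ∩ ⋂ m ∈ Set.Ioc n N, {ω | Z m ω ≤ 1} with hBsetdef
  have hBmeasG : ∀ n N, MeasurableSet[G n] (Bset n N) := by
    intro n N
    refine MeasurableSet.inter (measurableSet_lt measurable_const (hZmeas n n le_rfl)) ?_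
    refine MeasurableSet.biInter (Set.to_countable _) fun m hm => ?_
    exact measurableSet_le (hZmeas n m hm.1.le) measurable_const
  have hBm0 : ∀ n N, MeasurableSet (Bset n N) := fun n N => hGle n _ (hBmeasG n N)
  have hdisj : ∀ N, Set.Pairwise ↑(Finset.range (N + 1)) (Function.onFun Disjoint fun n => Bset n N) := by
    intro N
    have key : ∀ n m, n < m → m ≤ N → Disjoint (Bset n N) (Bset m N) := by
      intro n m hnm hmN
      rw [Set.disjoint_left]
      rintro ω ⟨-, h2⟩ ⟨h3, -⟩
      have := Set.mem_iInter₂.mp h2 m ⟨hnm, hmN⟩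
      exact absurd h3 (by simpa using this)
    intro n hn m hm hnm
    simp only [Finset.coe_range, Set.mem_Iio, Finset.mem_coe, Finset.mem_range] at hn hm
    rcases lt_or_gt_of_ne hnm with h | h
    · exact key n m h (Nat.lt_succ_iff.mp hm)
    · exact (key m n h (Nat.lt_succ_iff.mp hn)).symm
  have hBbound : ∀ N n, (μ (Bset n N)).toReal ≤ ∫ ω in Bset n N, Z 0 ω ∂μ := by
    intro N n
    have h1 : (μ (Bset n N)).toReal = ∫ _ω in Bset n N, (1 : ℝ) ∂μ := by
      simp [setIntegral_const, Measure.real]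
    have h2 : ∫ _ω in Bset n N, (1 : ℝ) ∂μ ≤ ∫ ω in Bset n N, Z n ω ∂μ := by
      refine setIntegral_mono_on ?_ (hZint n).integrableOn (hBm0 n N) ?_
      · exact integrableOn_const (measure_ne_top μ _)
      · exact fun ω hω => le_of_lt hω.1
    exact h1.trans_le (h2.trans (hchain n _ (hBmeasG n N)))
  have hTN : ∀ N, μ (⋃ n ∈ Finset.range (N + 1), Bset n N)
      ≤ ENNReal.ofReal (∫ ω, Z 0 ω ∂μ) := by
    intro N
    rw [measure_biUnion_finset (hdisj N) fun n _ => hBm0 n N]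
    have step1 : ∀ n ∈ Finset.range (N + 1),
        μ (Bset n N) ≤ ENNReal.ofReal (∫ ω in Bset n N, Z 0 ω ∂μ) := by
      intro n _
      rw [← ENNReal.ofReal_toReal (measure_ne_top μ (Bset n N))]
      exact ENNReal.ofReal_le_ofReal (hBbound N n)
    calc ∑ n ∈ Finset.range (N + 1), μ (Bset n N)
        ≤ ∑ n ∈ Finset.range (N + 1), ENNReal.ofReal (∫ ω in Bset n N, Z 0 ω ∂μ) :=
          Finset.sum_le_sum step1
      _ = ENNReal.ofReal (∑ n ∈ Finset.range (N + 1), ∫ ω in Bset n N, Z 0 ω ∂μ) := by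
          rw [ENNReal.ofReal_sum_of_nonneg]
          intro n _
          exact setIntegral_nonneg_ae (hBm0 n N) ((hZnn 0).mono fun ω h _ => h)
      _ = ENNReal.ofReal (∫ ω in ⋃ n ∈ Finset.range (N + 1), Bset n N, Z 0 ω ∂μ) := by
          rw [integral_biUnion_finset _ (fun n _ => hBm0 n N) (hdisj N)
            fun n _ => (hZint 0).integrableOn]
      _ ≤ ENNReal.ofReal (∫ ω, Z 0 ω ∂μ) :=
          ENNReal.ofReal_le_ofReal (setIntegral_le_integral (hZint 0) (hZnn 0))
  -- identify the biUnion with the nicer set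
  have hTeq : ∀ N, (⋃ n ∈ Finset.range (N + 1), Bset n N) = {ω | ∃ n ≤ N, 1 < Z n ω} := by
    intro N
    ext ω
    simp only [Set.mem_iUnion, Finset.mem_range, Set.mem_setOf_eq, Nat.lt_succ_iff]
    constructor
    · rintro ⟨n, hn, h1, -⟩
      exact ⟨n, hn, h1⟩
    · rintro ⟨n, hn, h1⟩
      set P : ℕ → Prop := fun m => 1 < Z m ω with hP
      refine ⟨Nat.findGreatest P N, Nat.findGreatest_le N, ?_, ?_⟩
      · exact Nat.findGreatest_spec (P := P) hn h1
      refine Set.mem_iInter₂.mpr fun m hm => ?_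
      have := Nat.findGreatest_is_greatest (P := P) hm.1 hm.2
      simpa [hP] using not_lt.mp (by simpa [hP] using this)
  -- main event inclusion
  have hmonoT : Monotone (fun N => {ω | ∃ n ≤ N, 1 < Z n ω}) := by
    intro N M hNM ω ⟨n, hn, h1⟩
    exact ⟨n, hn.trans hNM, h1⟩
  have hincl : μ {ω | ∃ n, ¬ LoewnerLE (Y n ω) A}
      ≤ μ (⋃ N, {ω | ∃ n ≤ N, 1 < Z n ω}) := by
    refine measure_mono_ae ?_
    have hae : ∀ᵐ ω ∂μ, ∀ n, (Y n ω).PosSemidef := by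
      rw [ae_all_iff]; exact hpos
    filter_upwards [hae] with ω hω
    intro hmem
    obtain ⟨n, hn⟩ := hmem
    have h1 : 1 < Z n ω := key_lemma (hω n) hA hn
    exact Set.mem_iUnion.mpr ⟨n, ⟨n, le_rfl, h1⟩⟩
  have hEZ : ∫ ω, Z 0 ω ∂μ = (matExpect μ (Y 0) * A⁻¹).trace := by
    rw [trace_mul_eq']
    have h1 : ∫ ω, Z 0 ω ∂μ
        = ∑ p : Fin d × Fin d, ∫ ω, Y 0 ω p.1 p.2 * A⁻¹ p.2 p.1 ∂μ := by
      rw [← integral_finset_sum _ fun p _ => (hint 0 p.1 p.2).mul_const _]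
      refine integral_congr_ae (Eventually.of_forall fun ω => ?_)
      exact hZeq 0 ω
    rw [h1]
    refine Finset.sum_congr rfl fun p _ => ?_
    rw [integral_mul_const]
    rfl
  calc μ {ω | ∃ n, ¬ LoewnerLE (Y n ω) A}
      ≤ μ (⋃ N, {ω | ∃ n ≤ N, 1 < Z n ω}) := hincl
    _ = ⨆ N, μ {ω | ∃ n ≤ N, 1 < Z n ω} :=
        (hmonoT.directed_le).measure_iUnion
    _ ≤ ENNReal.ofReal (∫ ω, Z 0 ω ∂μ) := by
        refine iSup_le fun N => ?_
        rw [← hTeq N]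
        exact hTN N
    _ = ENNReal.ofReal ((matExpect μ (Y 0) * A⁻¹).trace) := by rw [hEZ]

end
end

section
/- Let p ≥ 1 and let {Xₙ}_{n≥1} be an exchangeable sequence of random d×d real symmetric matrices with common mean M = E[X₁] and central p-th moment V_p := E[ (abs(X₁ − M))^p ] with integrable entries. Then for any a > 0, writing X̄ₙ = (X₁ + ⋯ + Xₙ)/n, P( ∃ n ≥ 1 : ‖X̄ₙ − M‖_op ≥ a ) ≤ P( ∃ n ≥ 1 : tr( (abs(X̄ₙ − M))^p ) ≥ a^p ) ≤ a^{−p} tr( V_p ). -/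
open MeasureTheory ProbabilityTheory Matrix Filter

noncomputable section

variable {d : ℕ}

lemma traceF_eq (f : ℝ → ℝ) {A : Matrix (Fin d) (Fin d) ℝ} (hA : A.IsHermitian) :
    (matCFC f A).trace = ∑ i, f (hA.eigenvalues i) := by
  rw [matCFC, dif_pos hA, Matrix.trace_mul_cycle]
  rw [Unitary.coe_star_mul_self hA.eigenvectorUnitary, one_mul, Matrix.trace_diagonal]

lemma spectral_real {A : Matrix (Fin d) (Fin d) ℝ} (hA : A.IsHermitian) :
    A = (hA.eigenvectorUnitary : Matrix (Fin d) (Fin d) ℝ) *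
        Matrix.diagonal hA.eigenvalues *
        star (hA.eigenvectorUnitary : Matrix (Fin d) (Fin d) ℝ) := by
  have := hA.spectral_theorem
  simpa using this

lemma aeval_conj (q : Polynomial ℝ) {A : Matrix (Fin d) (Fin d) ℝ} (hA : A.IsHermitian) :
    Polynomial.aeval A q =
      (hA.eigenvectorUnitary : Matrix (Fin d) (Fin d) ℝ) *
        Matrix.diagonal (fun i => q.eval (hA.eigenvalues i)) *
        star (hA.eigenvectorUnitary : Matrix (Fin d) (Fin d) ℝ) := by
  set U := (hA.eigenvectorUnitary : Matrix (Fin d) (Fin d) ℝ) with hU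
  have hUs : U * star U = 1 := Unitary.coe_mul_star_self hA.eigenvectorUnitary
  have hsU : star U * U = 1 := Unitary.coe_star_mul_self hA.eigenvectorUnitary
  induction q using Polynomial.induction_on with
  | C c =>
      simp only [Polynomial.aeval_C, Polynomial.eval_C]
      rw [Matrix.algebraMap_eq_diagonal, ← Matrix.smul_one_eq_diagonal,
        Matrix.mul_smul, smul_mul_assoc, mul_one, hUs]
      rw [Matrix.smul_one_eq_diagonal]
      congr 1
  | add p q hp hq =>
      simp [hp, hq, ← Matrix.diagonal_add, Matrix.add_mul, Matrix.mul_add]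
  | monomial n c ih =>
      have h1 : Polynomial.C c * Polynomial.X ^ (n + 1)
          = Polynomial.C c * Polynomial.X ^ n * Polynomial.X := by ring
      rw [h1, _root_.map_mul, ih, Polynomial.aeval_X]
      rw [congrArg (fun B => (U * Matrix.diagonal fun i => Polynomial.eval (hA.eigenvalues i)
        (Polynomial.C c * Polynomial.X ^ n)) * star U * B) (spectral_real hA)]
      rw [← hU]
      calc (U * Matrix.diagonal fun i => Polynomial.eval (hA.eigenvalues i)
              (Polynomial.C c * Polynomial.X ^ n)) * star U *
            (U * Matrix.diagonal hA.eigenvalues * star U)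
          = U * ((Matrix.diagonal fun i => Polynomial.eval (hA.eigenvalues i)
              (Polynomial.C c * Polynomial.X ^ n)) * (star U * U) * Matrix.diagonal hA.eigenvalues)
              * star U := by
            noncomm_ring
        _ = _ := by
            rw [hsU, mul_one, Matrix.diagonal_mul_diagonal]
            simp only [Polynomial.eval_mul, Polynomial.eval_C, Polynomial.eval_pow,
              Polynomial.eval_X, pow_succ, mul_assoc]
lemma conj_diag_entry (W : Matrix (Fin d) (Fin d) ℝ) (v : Fin d → ℝ) (k : Fin d) :
    (W * Matrix.diagonal v * star W) k k = ∑ j, (W k j * W k j) * v j := by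
  rw [Matrix.mul_apply]
  refine Finset.sum_congr rfl fun j _ => ?_
  rw [Matrix.mul_diagonal, Matrix.star_apply, star_trivial]
  ring

lemma peierls (f : ℝ → ℝ) (hf : ConvexOn ℝ Set.univ f) {A U : Matrix (Fin d) (Fin d) ℝ}
    (hA : A.IsHermitian) (hsU : star U * U = 1) (hUs : U * star U = 1) :
    ∑ k, f ((star U * A * U) k k) ≤ ∑ j, f (hA.eigenvalues j) := by
  set V := (hA.eigenvectorUnitary : Matrix (Fin d) (Fin d) ℝ) with hV
  have hVs : star V * V = 1 := Unitary.coe_star_mul_self hA.eigenvectorUnitary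
  have hsV : V * star V = 1 := Unitary.coe_mul_star_self hA.eigenvectorUnitary
  set W := star U * V with hW
  have hWentry : ∀ k, (star U * A * U) k k
      = ∑ j, (W k j * W k j) * hA.eigenvalues j := by
    intro k
    have h1 : star U * A * U = W * Matrix.diagonal hA.eigenvalues * star W := by
      conv_lhs => rw [congrArg (fun B => star U * B * U) (spectral_real hA)]
      rw [hW, ← hV]
      rw [StarMul.star_mul, star_star]
      noncomm_ring
    rw [h1, conj_diag_entry]
  have hWrow : ∀ k, ∑ j, W k j * W k j = 1 := by
    intro k
    have h2 : W * star W = 1 := by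
      rw [hW, StarMul.star_mul, star_star, mul_assoc, ← mul_assoc V, hsV, one_mul, hsU]
    have := congrFun (congrFun h2 k) k
    rw [Matrix.mul_apply] at this
    rw [← Matrix.one_apply_eq k, ← this]
    refine Finset.sum_congr rfl fun j _ => ?_
    rw [Matrix.star_apply, star_trivial]
  have hWcol : ∀ j, ∑ k, W k j * W k j = 1 := by
    intro j
    have h2 : star W * W = 1 := by
      rw [hW, StarMul.star_mul, star_star, mul_assoc, ← mul_assoc U, hUs, one_mul, hVs]
    have := congrFun (congrFun h2 j) j
    rw [Matrix.mul_apply] at this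
    rw [← Matrix.one_apply_eq j, ← this]
    refine Finset.sum_congr rfl fun k _ => ?_
    rw [Matrix.star_apply, star_trivial]
  calc ∑ k, f ((star U * A * U) k k)
      ≤ ∑ k, ∑ j, (W k j * W k j) * f (hA.eigenvalues j) := by
        refine Finset.sum_le_sum fun k _ => ?_
        rw [hWentry k]
        have := hf.map_sum_le (t := Finset.univ) (w := fun j => W k j * W k j)
          (p := fun j => hA.eigenvalues j)
          (fun j _ => mul_self_nonneg _) (hWrow k) (fun j _ => Set.mem_univ _)
        simpa [smul_eq_mul] using this
    _ = ∑ j, (∑ k, W k j * W k j) * f (hA.eigenvalues j) := by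
        rw [Finset.sum_comm]
        simp [Finset.sum_mul]
    _ = ∑ j, f (hA.eigenvalues j) := by
        refine Finset.sum_congr rfl fun j _ => ?_
        rw [hWcol j, one_mul]

lemma isHermitian_sum {ι : Type*} {s : Finset ι} {A : ι → Matrix (Fin d) (Fin d) ℝ}
    (h : ∀ i ∈ s, (A i).IsHermitian) : (∑ i ∈ s, A i).IsHermitian := by
  show _ = _
  rw [Matrix.conjTranspose_sum]
  exact Finset.sum_congr rfl h

lemma isHermitian_smul {c : ℝ} {A : Matrix (Fin d) (Fin d) ℝ} (h : A.IsHermitian) :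
    (c • A).IsHermitian := by
  show _ = _
  rw [Matrix.conjTranspose_smul, h.eq]
  rfl

lemma traceF_avg_le (f : ℝ → ℝ) (hf : ConvexOn ℝ Set.univ f) {n : ℕ} (hn : 0 < n)
    (A : ℕ → Matrix (Fin d) (Fin d) ℝ) (hA : ∀ i, (A i).IsHermitian) :
    (matCFC f ((n:ℝ)⁻¹ • ∑ i ∈ Finset.range n, A i)).trace
      ≤ (n:ℝ)⁻¹ * ∑ i ∈ Finset.range n, (matCFC f (A i)).trace := by
  have hS : ((n:ℝ)⁻¹ • ∑ i ∈ Finset.range n, A i).IsHermitian :=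
    isHermitian_smul (isHermitian_sum fun i _ => hA i)
  rw [traceF_eq f hS]
  set U := (hS.eigenvectorUnitary : Matrix (Fin d) (Fin d) ℝ) with hU
  have hsU : star U * U = 1 := Unitary.coe_star_mul_self hS.eigenvectorUnitary
  have hUs : U * star U = 1 := Unitary.coe_mul_star_self hS.eigenvectorUnitary
  have hn' : (0:ℝ) < n := by exact_mod_cast hn
  have hdiag : star U * ((n:ℝ)⁻¹ • ∑ i ∈ Finset.range n, A i) * U
      = Matrix.diagonal hS.eigenvalues := by
    have := hS.conjStarAlgAut_star_eigenvectorUnitary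
    rw [Unitary.conjStarAlgAut_star_apply, RCLike.ofReal_real_eq_id, Function.id_comp] at this
    exact this
  have heig : ∀ k, hS.eigenvalues k
      = ∑ i ∈ Finset.range n, (n:ℝ)⁻¹ • ((star U * A i * U) k k) := by
    intro k
    have h1 : hS.eigenvalues k = (star U * ((n:ℝ)⁻¹ • ∑ i ∈ Finset.range n, A i) * U) k k := by
      rw [hdiag, Matrix.diagonal_apply_eq]
    have h2 : star U * ((n:ℝ)⁻¹ • ∑ i ∈ Finset.range n, A i) * U
        = (n:ℝ)⁻¹ • ∑ i ∈ Finset.range n, star U * A i * U := by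
      rw [Matrix.mul_smul, Matrix.smul_mul, Matrix.mul_sum, Matrix.sum_mul]
    rw [h1, h2]
    simp [Finset.mul_sum, Matrix.sum_apply]
  calc ∑ k, f (hS.eigenvalues k)
      ≤ ∑ k, ∑ i ∈ Finset.range n, (n:ℝ)⁻¹ * f ((star U * A i * U) k k) := by
        refine Finset.sum_le_sum fun k _ => ?_
        rw [heig k]
        have hw : ∑ _i ∈ Finset.range n, (n:ℝ)⁻¹ = 1 := by
          simp only [Finset.sum_const, Finset.card_range, nsmul_eq_mul]
          exact mul_inv_cancel₀ (ne_of_gt hn')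
        have := (hf.map_sum_le (t := Finset.range n) (w := fun _ => (n:ℝ)⁻¹)
          (p := fun i => (star U * A i * U) k k) (fun i _ => by positivity)
          hw (fun i _ => Set.mem_univ _))
        simpa [smul_eq_mul] using this
    _ = ∑ i ∈ Finset.range n, (n:ℝ)⁻¹ * ∑ k, f ((star U * A i * U) k k) := by
        rw [Finset.sum_comm]
        simp [Finset.mul_sum]
    _ ≤ ∑ i ∈ Finset.range n, (n:ℝ)⁻¹ * (matCFC f (A i)).trace := by
        refine Finset.sum_le_sum fun i _ => ?_
        have hp := peierls f hf (hA i) hsU hUs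
        rw [traceF_eq f (hA i)]
        exact mul_le_mul_of_nonneg_left hp (by positivity)
    _ = (n:ℝ)⁻¹ * ∑ i ∈ Finset.range n, (matCFC f (A i)).trace := by rw [Finset.mul_sum]

lemma traceF_eq_zero (f : ℝ → ℝ) {A : Matrix (Fin d) (Fin d) ℝ} (hA : ¬ A.IsHermitian) :
    (matCFC f A).trace = 0 := by
  rw [matCFC, dif_neg hA, Matrix.trace_zero]

lemma trace_aeval (q : Polynomial ℝ) {A : Matrix (Fin d) (Fin d) ℝ} (hA : A.IsHermitian) :
    (Polynomial.aeval A q).trace = ∑ i, q.eval (hA.eigenvalues i) := by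
  rw [aeval_conj q hA, Matrix.trace_mul_cycle,
    Unitary.coe_star_mul_self hA.eigenvectorUnitary, one_mul, Matrix.trace_diagonal]

lemma measurable_entry (i j : Fin d) : Measurable fun A : Matrix (Fin d) (Fin d) ℝ => A i j :=
  (measurable_pi_apply j).comp (measurable_pi_apply i)

lemma measurable_entry_pow (k : ℕ) (i j : Fin d) :
    Measurable fun A : Matrix (Fin d) (Fin d) ℝ => (A ^ k) i j := by
  induction k generalizing i j with
  | zero => simp only [pow_zero]; exact measurable_const
  | succ k ih =>
      have : (fun A : Matrix (Fin d) (Fin d) ℝ => (A ^ (k+1)) i j)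
          = fun A => ∑ l, (A ^ k) i l * A l j := by
        funext A
        rw [pow_succ, Matrix.mul_apply]
      rw [this]
      exact Finset.measurable_sum _ fun l _ => ((ih i l).mul (measurable_entry l j))

lemma measurable_trace_aeval (q : Polynomial ℝ) :
    Measurable fun A : Matrix (Fin d) (Fin d) ℝ => (Polynomial.aeval A q).trace := by
  have h : (fun A : Matrix (Fin d) (Fin d) ℝ => (Polynomial.aeval A q).trace)
      = fun A => ∑ k ∈ Finset.range (q.natDegree + 1), q.coeff k * (A ^ k).trace := by
    funext A
    rw [Polynomial.aeval_eq_sum_range, Matrix.trace_sum]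
    refine Finset.sum_congr rfl fun k _ => ?_
    rw [Matrix.trace_smul, smul_eq_mul]
  rw [h]
  refine Finset.measurable_sum _ fun k _ => Measurable.const_mul ?_ _
  unfold Matrix.trace
  exact Finset.measurable_sum _ fun i _ => measurable_entry_pow k i i

lemma measurableSet_isHermitian :
    MeasurableSet {A : Matrix (Fin d) (Fin d) ℝ | A.IsHermitian} := by
  have h : {A : Matrix (Fin d) (Fin d) ℝ | A.IsHermitian}
      = ⋂ i, ⋂ j, {A : Matrix (Fin d) (Fin d) ℝ | A j i = A i j} := by
    ext A
    simp only [Set.mem_setOf_eq, Set.mem_iInter, Matrix.IsHermitian.ext_iff, star_trivial]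
  rw [h]
  exact MeasurableSet.iInter fun i => MeasurableSet.iInter fun j =>
    measurableSet_eq_fun (measurable_entry j i) (measurable_entry i j)

lemma measurable_traceCFC (f : ℝ → ℝ) (hf : Continuous f) :
    Measurable fun A : Matrix (Fin d) (Fin d) ℝ => (matCFC f A).trace := by
  have hq : ∀ k : ℕ, ∃ q : Polynomial ℝ, ∀ x ∈ Set.Icc (-(k:ℝ)) k,
      |q.eval x - f x| < 1/(k+1) :=
    fun k => exists_polynomial_near_of_continuousOn _ _ f hf.continuousOn _ (by positivity)
  choose q hq using hq
  set F : ℕ → Matrix (Fin d) (Fin d) ℝ → ℝ :=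
    fun k A => if A.IsHermitian then (Polynomial.aeval A (q k)).trace else 0 with hF
  have hFmeas : ∀ k, Measurable (F k) := fun k =>
    Measurable.ite measurableSet_isHermitian (measurable_trace_aeval (q k)) measurable_const
  refine measurable_of_tendsto_metrizable' atTop hFmeas (tendsto_pi_nhds.2 fun A => ?_)
  by_cases hA : A.IsHermitian
  · have hB : ∃ K : ℕ, ∀ i, |hA.eigenvalues i| ≤ K := by
      obtain ⟨K, hK⟩ := exists_nat_ge (∑ j, |hA.eigenvalues j|)
      exact ⟨K, fun i => le_trans (Finset.single_le_sum
        (f := fun j => |hA.eigenvalues j|) (fun j _ => abs_nonneg _) (Finset.mem_univ i)) hK⟩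
    obtain ⟨K, hK⟩ := hB
    rw [traceF_eq f hA]
    have hkey : ∀ k : ℕ, K ≤ k →
        ‖F k A - ∑ i, f (hA.eigenvalues i)‖ ≤ d * (1/(k+1)) := by
      intro k hk
      have : F k A = ∑ i, (q k).eval (hA.eigenvalues i) := by
        rw [hF]; simp only [if_pos hA]; exact trace_aeval (q k) hA
      rw [this, ← Finset.sum_sub_distrib]
      calc ‖∑ i, ((q k).eval (hA.eigenvalues i) - f (hA.eigenvalues i))‖
          ≤ ∑ i, ‖(q k).eval (hA.eigenvalues i) - f (hA.eigenvalues i)‖ :=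
            norm_sum_le _ _
        _ ≤ ∑ _i : Fin d, (1/((k:ℝ)+1)) := by
            refine Finset.sum_le_sum fun i _ => ?_
            refine le_of_lt (hq k _ ?_)
            have := hK i
            have hKk : (K:ℝ) ≤ k := by exact_mod_cast hk
            rw [Set.mem_Icc]
            constructor
            · linarith [abs_le.1 (le_trans this hKk : |hA.eigenvalues i| ≤ (k:ℝ))]
            · linarith [abs_le.1 (le_trans this hKk : |hA.eigenvalues i| ≤ (k:ℝ))]
        _ = d * (1/(k+1)) := by simp [Finset.sum_const, nsmul_eq_mul]
    have htend : Tendsto (fun k : ℕ => (d:ℝ) * (1/(k+1))) atTop (nhds 0) := by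
      have := tendsto_one_div_add_atTop_nhds_zero_nat (𝕜 := ℝ)
      simpa using this.const_mul (d:ℝ)
    have := squeeze_zero_norm' (Filter.eventually_atTop.2 ⟨K, hkey⟩) htend
    have h2 : Tendsto (fun k => F k A) atTop (nhds (∑ i, f (hA.eigenvalues i))) := by
      have := this.add (tendsto_const_nhds (x := ∑ i, f (hA.eigenvalues i)))
      simpa using this
    exact h2
  · rw [traceF_eq_zero f hA]
    have : (fun k => F k A) = fun _ => 0 := by
      funext k; rw [hF]; simp only [if_neg hA]
    rw [this]
    exact tendsto_const_nhds
lemma convexOn_abs_rpow {p : ℝ} (hp : 1 ≤ p) : ConvexOn ℝ Set.univ (fun x : ℝ => |x| ^ p) := by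
  have h0p : (0:ℝ) ≤ p := le_trans zero_le_one hp
  refine ⟨convex_univ, fun x _ y _ a b ha hb hab => ?_⟩
  calc |a • x + b • y| ^ p ≤ (a * |x| + b * |y|) ^ p := by
        apply Real.rpow_le_rpow (abs_nonneg _) ?_ h0p
        calc |a • x + b • y| ≤ |a • x| + |b • y| := abs_add_le _ _
          _ = a * |x| + b * |y| := by
              rw [smul_eq_mul, smul_eq_mul, abs_mul, abs_mul,
                abs_of_nonneg ha, abs_of_nonneg hb]
    _ ≤ a * |x| ^ p + b * |y| ^ p := by
        have := (convexOn_rpow hp).2 (Set.mem_Ici.2 (abs_nonneg x))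
          (Set.mem_Ici.2 (abs_nonneg y)) ha hb hab
        simpa [smul_eq_mul] using this

lemma traceF_nonneg {p : ℝ} {A : Matrix (Fin d) (Fin d) ℝ} :
    0 ≤ (matCFC (fun x => |x| ^ p) A).trace := by
  by_cases hA : A.IsHermitian
  · rw [traceF_eq _ hA]
    exact Finset.sum_nonneg fun i _ => Real.rpow_nonneg (abs_nonneg _) p
  · rw [traceF_eq_zero _ hA]

lemma spec_le {p : ℝ} (hp : 1 ≤ p) {A : Matrix (Fin d) (Fin d) ℝ} (hA : A.IsHermitian)
    {a : ℝ} (ha : 0 < a) (h : a ≤ specNorm A) :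
    a ^ p ≤ (matCFC (fun x => |x| ^ p) A).trace := by
  rw [specNorm, dif_pos hA] at h
  rcases Nat.eq_zero_or_pos d with hd | hd
  · exfalso
    subst hd
    rw [Real.iSup_of_isEmpty] at h
    linarith
  · haveI : Nonempty (Fin d) := ⟨⟨0, hd⟩⟩
    obtain ⟨i, hi⟩ := exists_eq_ciSup_of_finite (f := fun i => |hA.eigenvalues i|)
    rw [← hi] at h
    rw [traceF_eq _ hA]
    calc a ^ p ≤ |hA.eigenvalues i| ^ p :=
          Real.rpow_le_rpow (le_of_lt ha) h (le_trans zero_le_one hp)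
      _ ≤ ∑ j, |hA.eigenvalues j| ^ p :=
          Finset.single_le_sum (fun j _ => Real.rpow_nonneg (abs_nonneg _) p)
            (Finset.mem_univ i)

def cycAux (N : ℕ) : Equiv.Perm ℕ where
  toFun n := if n < N then n + 1 else if n = N then 0 else n
  invFun n := if n = 0 then N else if n ≤ N then n - 1 else n
  left_inv n := by
    dsimp only
    by_cases h : n < N
    · rw [if_pos h, if_neg (Nat.succ_ne_zero n), if_pos (by omega)]
      omega
    · by_cases h2 : n = N
      · rw [if_neg h, if_pos h2, if_pos rfl]
        omega
      · rw [if_neg h, if_neg h2, if_neg (by omega), if_neg (by omega)]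
  right_inv n := by
    dsimp only
    by_cases h : n = 0
    · rw [if_pos h, if_neg (lt_irrefl N), if_pos rfl]
      omega
    · by_cases h2 : n ≤ N
      · rw [if_neg h, if_pos h2, if_pos (by omega)]
        omega
      · rw [if_neg h, if_neg h2, if_neg (by omega), if_neg (by omega)]

lemma cyc_support (N : ℕ) : {n | cycAux N n ≠ n}.Finite := by
  apply (Set.finite_Iic N).subset
  intro n hn
  simp only [Set.mem_setOf_eq, cycAux, Equiv.coe_fn_mk] at hn
  simp only [Set.mem_Iic]
  by_contra hc
  push_neg at hc
  apply hn
  rw [if_neg (by omega), if_neg (by omega)]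

lemma cyc_lt {N n : ℕ} (h : n < N) : cycAux N n = n + 1 := by
  simp [cycAux, h]

lemma measurable_entry' (i j : Fin d) : Measurable fun A : Matrix (Fin d) (Fin d) ℝ => A i j :=
  (measurable_pi_apply j).comp (measurable_pi_apply i)

lemma measurable_sub_const (M : Matrix (Fin d) (Fin d) ℝ) :
    Measurable fun A : Matrix (Fin d) (Fin d) ℝ => A - M := by
  apply measurable_pi_lambda
  intro i
  apply measurable_pi_lambda
  intro j
  exact (measurable_entry' i j).sub measurable_const

lemma measurable_sup' {α : Type*} [MeasurableSpace α] {ι : Type*} {s : Finset ι}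
    (hs : s.Nonempty) (g : ι → α → ℝ) (hg : ∀ i, Measurable (g i)) :
    Measurable fun a => s.sup' hs fun i => g i a := by
  induction hs using Finset.Nonempty.cons_induction with
  | singleton i => simpa using hg i
  | cons i s his hs ih =>
      have : (fun a => (Finset.cons i s his).sup' (Finset.cons_nonempty his) fun j => g j a)
          = fun a => (g i a) ⊔ (s.sup' hs fun j => g j a) := by
        funext a
        rw [Finset.sup'_cons]
      rw [this]
      exact (hg i).sup ih


/-- **Exchangeable matrix p-Chebyshev trace inequality.**
For `p ≥ 1`, an exchangeable sequence of random symmetric matrices with mean `M` and central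
p-th moment `V_p = E[(abs(X₁ - M))^p]`, and any `a > 0`:
`P(∃ n ≥ 1, ‖X̄ₙ - M‖_op ≥ a) ≤ P(∃ n ≥ 1, tr((abs(X̄ₙ - M))^p) ≥ a^p) ≤ a^{-p} tr(V_p)`. -/
theorem stmt18 {Ω : Type*} {m0 : MeasurableSpace Ω} (μ : Measure Ω) [IsProbabilityMeasure μ]
    {d : ℕ} (p : ℝ) (hp : 1 ≤ p)
    (X : ℕ → Ω → Matrix (Fin d) (Fin d) ℝ)
    (hmeas : ∀ n, Measurable (X n))
    (hsymm : ∀ n ω, (X n ω).IsHermitian)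
    (hexch : MatExchangeable μ X)
    (M Vp : Matrix (Fin d) (Fin d) ℝ)
    (hM : matExpect μ (X 0) = M)
    (hVpint : ∀ i j, Integrable (fun ω => matCFC (fun x => |x| ^ p) (X 0 ω - M) i j) μ)
    (hVp : matExpect μ (fun ω => matCFC (fun x => |x| ^ p) (X 0 ω - M)) = Vp)
    (a : ℝ) (ha : 0 < a) :
    μ {ω | ∃ n : ℕ, 1 ≤ n ∧
        a ≤ specNorm ((n : ℝ)⁻¹ • ∑ i ∈ Finset.range n, X i ω - M)} ≤
      μ {ω | ∃ n : ℕ, 1 ≤ n ∧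
        a ^ p ≤ (matCFC (fun x => |x| ^ p)
          ((n : ℝ)⁻¹ • ∑ i ∈ Finset.range n, X i ω - M)).trace} ∧
    μ {ω | ∃ n : ℕ, 1 ≤ n ∧
        a ^ p ≤ (matCFC (fun x => |x| ^ p)
          ((n : ℝ)⁻¹ • ∑ i ∈ Finset.range n, X i ω - M)).trace} ≤
      ENNReal.ofReal (a ^ (-p) * Vp.trace) := by
  classical
  have h0p : (0:ℝ) ≤ p := le_trans zero_le_one hp
  set f : ℝ → ℝ := fun x => |x| ^ p with hfdef
  have hfc : Continuous f := continuous_abs.rpow_const fun _ => Or.inr h0p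
  have hconv : ConvexOn ℝ Set.univ f := convexOn_abs_rpow hp
  have hMH : M.IsHermitian := by
    apply Matrix.IsHermitian.ext
    intro i j
    rw [star_trivial, ← hM]
    show (∫ ω, X 0 ω j i ∂μ) = ∫ ω, X 0 ω i j ∂μ
    apply integral_congr_ae
    filter_upwards with ω
    have := (hsymm 0 ω).apply i j
    rwa [star_trivial] at this
  have hXherm : ∀ n ω, (X n ω - M).IsHermitian := fun n ω => (hsymm n ω).sub hMH
  set g : Matrix (Fin d) (Fin d) ℝ → ℝ := fun A => (matCFC f (A - M)).trace with hgdef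
  have hgmeas : Measurable g := (measurable_traceCFC f hfc).comp (measurable_sub_const M)
  set W : ℕ → Ω → ℝ := fun n ω => g (X n ω) with hWdef
  have hWmeas : ∀ n, Measurable (W n) := fun n => hgmeas.comp (hmeas n)
  have hWnonneg : ∀ n ω, 0 ≤ W n ω := fun n ω => traceF_nonneg
  have hW0sum : W 0 = fun ω => ∑ i, matCFC f (X 0 ω - M) i i := by
    funext ω
    simp only [hWdef, hgdef, Matrix.trace, Matrix.diag]
  have hW0int : Integrable (W 0) μ := by
    rw [hW0sum]
    exact integrable_finset_sum _ fun i _ => hVpint i i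
  have hEW0 : ∫ ω, W 0 ω ∂μ = Vp.trace := by
    rw [← hVp, hW0sum, integral_finset_sum _ fun i _ => hVpint i i]
    simp only [matExpect, Matrix.trace, Matrix.diag, Matrix.of_apply]
  have hVtr : 0 ≤ Vp.trace := by
    rw [← hEW0]
    exact integral_nonneg fun ω => hWnonneg 0 ω
  set seq : Ω → (ℕ → Matrix (Fin d) (Fin d) ℝ) := fun ω n => X n ω with hseqdef
  have hseqmeas : Measurable seq := measurable_pi_lambda _ hmeas
  have hkey : ∀ (σ : Equiv.Perm ℕ), {n | σ n ≠ n}.Finite →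
      ∀ (H : (ℕ → Matrix (Fin d) (Fin d) ℝ) → ℝ), Measurable H →
      ∫ ω, H (fun n => X (σ n) ω) ∂μ = ∫ ω, H (seq ω) ∂μ := by
    intro σ hσ H hH
    have h1 : Measurable fun ω => (fun n => X (σ n) ω) :=
      measurable_pi_lambda _ fun n => hmeas (σ n)
    rw [← integral_map h1.aemeasurable hH.aestronglyMeasurable, hexch σ hσ,
      integral_map hseqmeas.aemeasurable hH.aestronglyMeasurable]
  have hkeyInt : ∀ (σ : Equiv.Perm ℕ), {n | σ n ≠ n}.Finite →
      ∀ (H : (ℕ → Matrix (Fin d) (Fin d) ℝ) → ℝ), Measurable H →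
      (Integrable (fun ω => H (fun n => X (σ n) ω)) μ ↔ Integrable (fun ω => H (seq ω)) μ) := by
    intro σ hσ H hH
    have h1 : Measurable fun ω => (fun n => X (σ n) ω) :=
      measurable_pi_lambda _ fun n => hmeas (σ n)
    have A1 : Integrable H (μ.map (fun ω n => X (σ n) ω))
        ↔ Integrable (H ∘ (fun ω n => X (σ n) ω)) μ :=
      integrable_map_measure hH.aestronglyMeasurable h1.aemeasurable
    have A2 : Integrable H (μ.map seq) ↔ Integrable (H ∘ seq) μ :=
      integrable_map_measure hH.aestronglyMeasurable hseqmeas.aemeasurable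
    rw [hexch σ hσ] at A1
    exact Iff.trans A1.symm A2
  have hWint : ∀ i, Integrable (W i) μ := by
    intro i
    have hσ : {n | Equiv.swap 0 i n ≠ n}.Finite := by
      apply ((Set.finite_singleton i).insert 0).subset
      intro n hn
      by_contra hc
      simp only [Set.mem_insert_iff, Set.mem_singleton_iff] at hc
      push_neg at hc
      exact hn (Equiv.swap_apply_of_ne_of_ne hc.1 hc.2)
    have hH : Measurable fun x : ℕ → Matrix (Fin d) (Fin d) ℝ => g (x 0) :=
      hgmeas.comp (measurable_pi_apply 0)
    have h1 := (hkeyInt (Equiv.swap 0 i) hσ (fun x => g (x 0)) hH).2 hW0int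
    simpa [Equiv.swap_apply_left] using h1
  have main : ∀ t : ℝ, 0 < t →
      μ {ω | ∃ n : ℕ, 1 ≤ n ∧ (n:ℝ) * t < ∑ i ∈ Finset.range n, W i ω}
        ≤ ENNReal.ofReal (Vp.trace / t) := by
    intro t ht
    set D : (ℕ → Matrix (Fin d) (Fin d) ℝ) → ℕ → ℝ :=
      fun x n => (∑ i ∈ Finset.range (n+1), g (x i)) - ((n:ℝ)+1) * t with hD
    set MF : ℕ → (ℕ → Matrix (Fin d) (Fin d) ℝ) → ℝ :=
      fun N x => ((Finset.range (N+1)).sup' Finset.nonempty_range_add_one (D x)) ⊔ 0 with hMF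
    have hDmeas : ∀ n, Measurable (fun x => D x n) := by
      intro n
      apply Measurable.sub ?_ measurable_const
      exact Finset.measurable_sum _ fun i _ => hgmeas.comp (measurable_pi_apply i)
    have hMFmeas : ∀ N, Measurable (MF N) := fun N =>
      (measurable_sup' Finset.nonempty_range_add_one (fun n x => D x n) hDmeas).max measurable_const
    have hMFnonneg : ∀ N x, 0 ≤ MF N x := fun N x => le_sup_right
    have hMFdep : ∀ N (x y : ℕ → Matrix (Fin d) (Fin d) ℝ),
        (∀ i, i ≤ N → x i = y i) → MF N x = MF N y := by
      intro N x y hxy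
      have hcong : ∀ n ∈ Finset.range (N+1), D x n = D y n := by
        intro n hn
        rw [Finset.mem_range] at hn
        simp only [hD]
        congr 1
        refine Finset.sum_congr rfl fun i hi => ?_
        rw [Finset.mem_range] at hi
        rw [hxy i (by omega)]
      simp only [hMF]
      rw [Finset.sup'_congr Finset.nonempty_range_add_one rfl hcong]
    have hMFle : ∀ N x, MF N x ≤ ∑ i ∈ Finset.range (N+1), g (x i) := by
      intro N x
      apply sup_le ?_ (Finset.sum_nonneg fun i _ => traceF_nonneg)
      apply Finset.sup'_le
      intro n hn
      rw [Finset.mem_range] at hn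
      simp only [hD]
      have h1 : ∑ i ∈ Finset.range (n+1), g (x i) ≤ ∑ i ∈ Finset.range (N+1), g (x i) :=
        Finset.sum_le_sum_of_subset_of_nonneg (Finset.range_subset_range.2 (by omega))
          (fun i _ _ => traceF_nonneg)
      nlinarith [mul_pos (by positivity : (0:ℝ) < (n:ℝ)+1) ht]
    set E : ℕ → Set Ω := fun N => {ω | 0 < MF N (seq ω)} with hE
    have hEmeas : ∀ N, MeasurableSet (E N) :=
      fun N => measurableSet_lt measurable_const ((hMFmeas N).comp hseqmeas)
    have hshiftmeas : Measurable fun ω => (fun n => X (n+1) ω) :=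
      measurable_pi_lambda _ fun n => hmeas (n+1)
    have hbound : ∀ N, μ (E N) ≤ ENNReal.ofReal (Vp.trace / t) := by
      intro N
      have hm1 : Measurable fun ω => MF N (seq ω) := (hMFmeas N).comp hseqmeas
      have hm2 : Measurable fun ω => MF N (fun n => X (n+1) ω) := (hMFmeas N).comp hshiftmeas
      have hint1 : Integrable (fun ω => MF N (seq ω)) μ := by
        apply Integrable.mono' (integrable_finset_sum (Finset.range (N+1)) fun i _ => hWint i)
          hm1.aestronglyMeasurable
        filter_upwards with ω
        rw [Real.norm_eq_abs, abs_of_nonneg (hMFnonneg N _)]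
        exact hMFle N (seq ω)
      have hint2 : Integrable (fun ω => MF N (fun n => X (n+1) ω)) μ := by
        apply Integrable.mono' (integrable_finset_sum (Finset.range (N+1)) fun i _ => hWint (i+1))
          hm2.aestronglyMeasurable
        filter_upwards with ω
        rw [Real.norm_eq_abs, abs_of_nonneg (hMFnonneg N _)]
        exact hMFle N _
      have hshift : ∫ ω, MF N (fun n => X (n+1) ω) ∂μ = ∫ ω, MF N (seq ω) ∂μ := by
        rw [← hkey (cycAux (N+1)) (cyc_support (N+1)) (MF N) (hMFmeas N)]
        apply integral_congr_ae
        filter_upwards with ω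
        apply hMFdep
        intro i hi
        rw [cyc_lt (by omega : i < N+1)]
      set φ : Ω → ℝ := fun ω => MF N (seq ω) - MF N (fun n => X (n+1) ω) with hφ
      have hφint : Integrable φ μ := hint1.sub hint2
      have hφtot : ∫ ω, φ ω ∂μ = 0 := by
        rw [integral_sub hint1 hint2, hshift, sub_self]
      have hφcompl : ∀ ω, ω ∈ (E N)ᶜ → φ ω ≤ 0 := by
        intro ω hω
        simp only [hE, Set.mem_compl_iff, Set.mem_setOf_eq, not_lt] at hω
        have h1 : MF N (seq ω) = 0 := le_antisymm hω (hMFnonneg N _)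
        simp only [hφ, h1, zero_sub, neg_nonpos]
        exact hMFnonneg N _
      have hφE : ∀ ω, ω ∈ E N → φ ω ≤ W 0 ω - t := by
        intro ω hω
        simp only [hE, Set.mem_setOf_eq] at hω
        have hsup : 0 < (Finset.range (N+1)).sup' Finset.nonempty_range_add_one (D (seq ω)) := by
          by_contra hc
          push_neg at hc
          have h1 : MF N (seq ω) ≤ 0 := sup_le hc le_rfl
          exact absurd hω (not_lt.2 h1)
        obtain ⟨n, hn, hDn⟩ :=
          Finset.exists_mem_eq_sup' (Finset.nonempty_range_add_one (n := N)) (D (seq ω))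
        rw [Finset.mem_range] at hn
        have hMFeq : MF N (seq ω) = D (seq ω) n := by
          simp only [hMF]
          rw [sup_eq_left.2 (le_of_lt hsup), hDn]
        have hsum : ∑ i ∈ Finset.range (n+1), g (seq ω i)
            = g (seq ω 0) + ∑ i ∈ Finset.range n, g (seq ω (i+1)) := by
          rw [Finset.sum_range_succ']
          ring
        rcases Nat.eq_zero_or_pos n with hn0 | hn0
        · subst hn0
          have h2 : D (seq ω) 0 = W 0 ω - t := by
            simp [hD, hWdef]
            rfl
          have h3 := hMFnonneg N (fun m => X (m+1) ω)
          simp only [hφ]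
          rw [hMFeq, h2]
          linarith
        · have hD2 : D (seq ω) n = (W 0 ω - t) + D (fun m => X (m+1) ω) (n-1) := by
            simp only [hD]
            rw [hsum]
            have h1 : n - 1 + 1 = n := by omega
            rw [h1, Nat.cast_sub (by omega : 1 ≤ n)]
            simp only [hWdef]
            push_cast
            ring
          have hle : D (fun m => X (m+1) ω) (n-1) ≤ MF N (fun m => X (m+1) ω) :=
            le_trans (Finset.le_sup' _ (Finset.mem_range.2 (by omega : n - 1 < N + 1)))
              le_sup_left
          simp only [hφ]
          rw [hMFeq, hD2]
          linarith
      have hsplit := integral_add_compl (hEmeas N) hφint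
      have hcompl_le : ∫ ω in (E N)ᶜ, φ ω ∂μ ≤ 0 :=
        setIntegral_nonpos (hEmeas N).compl hφcompl
      have hEφ : 0 ≤ ∫ ω in E N, φ ω ∂μ := by linarith [hφtot, hsplit, hcompl_le]
      have hmono2 : ∫ ω in E N, φ ω ∂μ ≤ ∫ ω in E N, (W 0 ω - t) ∂μ :=
        setIntegral_mono_on hφint.integrableOn
          ((hW0int.sub (integrable_const t)).integrableOn) (hEmeas N) hφE
      have hconst : ∫ ω in E N, (W 0 ω - t) ∂μ
          = (∫ ω in E N, W 0 ω ∂μ) - t * (μ (E N)).toReal := by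
        rw [integral_sub hW0int.integrableOn ((integrable_const t).integrableOn),
          setIntegral_const, smul_eq_mul, mul_comm, measureReal_def]
      have hup : ∫ ω in E N, W 0 ω ∂μ ≤ Vp.trace := by
        rw [← hEW0]
        exact setIntegral_le_integral hW0int (Filter.Eventually.of_forall fun ω => hWnonneg 0 ω)
      have hfinal : (μ (E N)).toReal ≤ Vp.trace / t := by
        rw [le_div_iff₀ ht]
        linarith
      calc μ (E N) = ENNReal.ofReal ((μ (E N)).toReal) :=
            (ENNReal.ofReal_toReal (measure_ne_top μ _)).symm
        _ ≤ ENNReal.ofReal (Vp.trace / t) := ENNReal.ofReal_le_ofReal hfinal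
    have hcover : {ω | ∃ n : ℕ, 1 ≤ n ∧ (n:ℝ) * t < ∑ i ∈ Finset.range n, W i ω} ⊆ ⋃ N, E N := by
      intro ω hω
      obtain ⟨n, hn1, hng⟩ := hω
      apply Set.mem_iUnion.2 ⟨n - 1, ?_⟩
      show 0 < MF (n-1) (seq ω)
      have h1 : 0 < D (seq ω) (n-1) := by
        simp only [hD]
        have h2 : n - 1 + 1 = n := by omega
        rw [h2, Nat.cast_sub (by omega : 1 ≤ n)]
        have h3 : ∑ i ∈ Finset.range n, g (seq ω i) = ∑ i ∈ Finset.range n, W i ω := rfl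
        rw [h3]
        push_cast
        linarith
      calc (0:ℝ) < D (seq ω) (n-1) := h1
        _ ≤ MF (n-1) (seq ω) :=
            le_trans (Finset.le_sup' _ (Finset.mem_range.2 (by omega : n - 1 < n - 1 + 1)))
              le_sup_left
    have hmonoE : Monotone E := by
      intro N N' hNN ω hω
      simp only [hE, Set.mem_setOf_eq] at hω ⊢
      calc (0:ℝ) < MF N (seq ω) := hω
        _ ≤ MF N' (seq ω) := by
            apply sup_le_sup_right
            apply Finset.sup'_le
            intro n hn
            rw [Finset.mem_range] at hn
            exact Finset.le_sup' _ (Finset.mem_range.2 (by omega))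
    calc μ {ω | ∃ n : ℕ, 1 ≤ n ∧ (n:ℝ) * t < ∑ i ∈ Finset.range n, W i ω}
        ≤ μ (⋃ N, E N) := measure_mono hcover
      _ = ⨆ N, μ (E N) := Directed.measure_iUnion hmonoE.directed_le
      _ ≤ ENNReal.ofReal (Vp.trace / t) := iSup_le hbound
  have hb : (0:ℝ) < a ^ p := Real.rpow_pos_of_pos ha p
  have part2 : μ {ω | ∃ n : ℕ, 1 ≤ n ∧
        a ^ p ≤ (matCFC f ((n : ℝ)⁻¹ • ∑ i ∈ Finset.range n, X i ω - M)).trace}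
      ≤ ENNReal.ofReal (a ^ (-p) * Vp.trace) := by
    have hsets : ∀ t : ℝ, 0 < t → t < a ^ p →
        {ω | ∃ n : ℕ, 1 ≤ n ∧
          a ^ p ≤ (matCFC f ((n : ℝ)⁻¹ • ∑ i ∈ Finset.range n, X i ω - M)).trace}
          ⊆ {ω | ∃ n : ℕ, 1 ≤ n ∧ (n:ℝ) * t < ∑ i ∈ Finset.range n, W i ω} := by
      intro t ht hta ω hω
      obtain ⟨n, hn1, hng⟩ := hω
      refine ⟨n, hn1, ?_⟩
      have hnpos : 0 < n := hn1
      have hnR : (0:ℝ) < n := by exact_mod_cast hnpos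
      have hrw : (n : ℝ)⁻¹ • ∑ i ∈ Finset.range n, X i ω - M
          = (n : ℝ)⁻¹ • ∑ i ∈ Finset.range n, (X i ω - M) := by
        rw [Finset.sum_sub_distrib, smul_sub, Finset.sum_const, Finset.card_range]
        congr 1
        rw [← Nat.cast_smul_eq_nsmul ℝ, smul_smul, inv_mul_cancel₀ (ne_of_gt hnR), one_smul]
      rw [hrw] at hng
      have havg : (matCFC f ((n:ℝ)⁻¹ • ∑ i ∈ Finset.range n, (X i ω - M))).trace
          ≤ (n:ℝ)⁻¹ * ∑ i ∈ Finset.range n, W i ω :=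
        traceF_avg_le f hconv hnpos (fun i => X i ω - M) (fun i => hXherm i ω)
      have h2 : a ^ p ≤ (n:ℝ)⁻¹ * ∑ i ∈ Finset.range n, W i ω := le_trans hng havg
      have h3 : (n:ℝ) * (a ^ p) ≤ ∑ i ∈ Finset.range n, W i ω := by
        have := mul_le_mul_of_nonneg_left h2 (le_of_lt hnR)
        rwa [← mul_assoc, mul_inv_cancel₀ (ne_of_gt hnR), one_mul] at this
      nlinarith
    set ts : ℕ → ℝ := fun m => a ^ p - a ^ p * (1/((m:ℝ)+2)) with hts
    have hfrac : ∀ m : ℕ, 0 < 1/((m:ℝ)+2) ∧ 1/((m:ℝ)+2) < 1 := by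
      intro m
      constructor
      · positivity
      · rw [div_lt_one (by positivity)]
        have : (0:ℝ) ≤ m := Nat.cast_nonneg m
        linarith
    have hts_pos : ∀ m, 0 < ts m := by
      intro m
      have h1 := (hfrac m).2
      have h2 := (hfrac m).1
      simp only [hts]
      nlinarith
    have hts_lt : ∀ m, ts m < a ^ p := by
      intro m
      have h2 := (hfrac m).1
      simp only [hts]
      nlinarith
    have hbound2 : ∀ m, μ {ω | ∃ n : ℕ, 1 ≤ n ∧
        a ^ p ≤ (matCFC f ((n : ℝ)⁻¹ • ∑ i ∈ Finset.range n, X i ω - M)).trace}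
          ≤ ENNReal.ofReal (Vp.trace / ts m) := fun m =>
      le_trans (measure_mono (hsets (ts m) (hts_pos m) (hts_lt m))) (main (ts m) (hts_pos m))
    have h00 : Tendsto (fun m : ℕ => 1/((m:ℝ)+2)) atTop (nhds 0) := by
      have h2 := (tendsto_one_div_add_atTop_nhds_zero_nat (𝕜 := ℝ)).comp (tendsto_add_atTop_nat 1)
      have h3 : ((fun n : ℕ => 1/((n:ℝ)+1)) ∘ fun m => m + 1) = fun m : ℕ => 1/((m:ℝ)+2) := by
        funext m
        simp only [Function.comp_apply]
        push_cast
        ring_nf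
      rwa [h3] at h2
    have hts_tend : Tendsto ts atTop (nhds (a ^ p)) := by
      have := (tendsto_const_nhds (x := a ^ p) (f := atTop (α := ℕ))).sub
        (h00.const_mul (a ^ p))
      simpa [hts] using this
    have htendsto : Tendsto (fun m : ℕ => ENNReal.ofReal (Vp.trace / ts m)) atTop
        (nhds (ENNReal.ofReal (Vp.trace / a ^ p))) := by
      apply ENNReal.tendsto_ofReal
      exact Tendsto.div tendsto_const_nhds hts_tend (ne_of_gt hb)
    have hlim := ge_of_tendsto' htendsto hbound2
    have hrw2 : a ^ (-p) * Vp.trace = Vp.trace / a ^ p := by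
      rw [Real.rpow_neg (le_of_lt ha), div_eq_mul_inv, mul_comm]
    rw [hrw2]
    exact hlim
  refine ⟨?_, part2⟩
  apply measure_mono
  intro ω hω
  obtain ⟨n, hn1, hspec⟩ := hω
  refine ⟨n, hn1, ?_⟩
  have hherm : ((n : ℝ)⁻¹ • ∑ i ∈ Finset.range n, X i ω - M).IsHermitian :=
    ((isHermitian_smul (isHermitian_sum fun i _ => hsymm i ω))).sub hMH
  exact spec_le hp hherm ha hspec

end
end
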